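/- arXiv:2510.27557 — 7 statements merged into one kernel-verified Lean document; each statement's English description precedes it below -/
import Mathlib

section
/- Let F : A ⥤ B be a functor admitting a right adjoint U, and let p : X ⥤ Y be a cocartesian fibration. Consider the functor Φ from the comma category Comma (𝟭 Fun(A,X)) ((− ∘ F) : Fun(B,X) ⥤ Fun(A,X)) — whose objects are triples (S : A ⥤ X, L : B ⥤ X, α : S ⟶ L ∘ F) — to the comma category Comma ((p ∘ −) : Fun(A,X) ⥤ Fun(A,Y)) ((− ∘ F) : Fun(B,Y) ⥤ Fun(A,Y)) — whose objects are triples (S : A ⥤ X, M : B ⥤ Y, β : p ∘ S ⟶ M ∘ F) — sending (S, L, α) to (S, p ∘ L, p·α), where p·α denotes the whiskering of α with p. Then Φ admits a fully faithful left adjoint (a left adjoint whose unit is a natural isomorphism). -/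
open CategoryTheory

universe v u

namespace Paper

/-- The canonical comparison functor `Arrow X ⥤ Comma p (𝟭 B)`. -/
def toCocartComma {X B : Type*} [Category X] [Category B] (p : X ⥤ B) :
    Arrow X ⥤ Comma p (𝟭 B) where
  obj f := { left := f.left, right := p.obj f.right, hom := p.map f.hom }
  map {f g} φ :=
    { left := φ.left
      right := p.map φ.right
      w := by
        dsimp
        rw [← p.map_comp, ← p.map_comp, Arrow.w] }

/-- A functor `p : X ⥤ B` is a cocartesian fibration if the canonical comparison functor
`Arrow X ⥤ Comma p (𝟭 B)` admits a fully faithful left adjoint. -/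
def IsCocartesianFibration {X B : Type*} [Category X] [Category B] (p : X ⥤ B) : Prop :=
  ∃ (L : Comma p (𝟭 B) ⥤ Arrow X) (adj : L ⊣ toCocartComma p), IsIso adj.unit

variable {A B X Y : Type u} [Category.{v} A] [Category.{v} B] [Category.{v} X] [Category.{v} Y]

/-- The functor from the comma category of triples `(S : A ⥤ X, L : B ⥤ X, α : S ⟶ L ∘ F)`
to the comma category of triples `(S : A ⥤ X, M : B ⥤ Y, β : p ∘ S ⟶ M ∘ F)`, sending
`(S, L, α)` to `(S, p ∘ L, p·α)`. -/
def postcompWhisker (F : A ⥤ B) (p : X ⥤ Y) :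
    Comma (𝟭 (A ⥤ X)) ((Functor.whiskeringLeft A B X).obj F) ⥤
      Comma ((Functor.whiskeringRight A X Y).obj p) ((Functor.whiskeringLeft A B Y).obj F) where
  obj c :=
    { left := c.left
      right := c.right ⋙ p
      hom := Functor.whiskerRight c.hom p }
  map {c c'} φ :=
    { left := φ.left
      right := Functor.whiskerRight φ.right p
      w := by
        ext a
        have h := congr_app φ.w a
        dsimp at h ⊢
        rw [← p.map_comp, ← p.map_comp, h] }

section Aux

variable (F : A ⥤ B) (U : B ⥤ A) (adjF : F ⊣ U) (p : X ⥤ Y)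
  (L : Comma p (𝟭 Y) ⥤ Arrow X) (adj : L ⊣ toCocartComma p)

/-- pointwise comma objects -/
def K : Comma ((Functor.whiskeringRight A X Y).obj p) ((Functor.whiskeringLeft A B Y).obj F) ⥤
    (B ⥤ Comma p (𝟭 Y)) where
  obj d :=
    { obj := fun b =>
        { left := d.left.obj (U.obj b)
          right := d.right.obj b
          hom := d.hom.app (U.obj b) ≫ d.right.map (adjF.counit.app b) }
      map := fun {b b'} h =>
        { left := d.left.map (U.map h)
          right := d.right.map h
          w := by
            dsimp
            have h1 := d.hom.naturality (U.map h)
            dsimp at h1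
            rw [reassoc_of% h1, ← d.right.map_comp, adjF.counit_naturality h]
            simp }
      map_id := by intro b; ext <;> simp
      map_comp := by intro b b' b'' h h'; ext <;> simp }
  map {d d'} φ :=
    { app := fun b =>
        { left := φ.left.app (U.obj b)
          right := φ.right.app b
          w := by
            dsimp
            have h1 := congr_app φ.w (U.obj b)
            dsimp at h1
            have h2 := φ.right.naturality (adjF.counit.app b)
            dsimp at h2
            rw [reassoc_of% h1, Category.assoc, ← h2] }
      naturality := by
        intro b b' h
        ext
        · exact φ.left.naturality (U.map h)
        · exact φ.right.naturality h }
  map_id := fun _ => rfl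
  map_comp := fun _ _ => rfl

/-- `c.left ⟶ (L.obj c).right`, natural in `c`. -/
def delta : Comma.fst p (𝟭 Y) ⟶ L ⋙ Arrow.rightFunc where
  app c := (adj.unit.app c).left ≫ (L.obj c).hom
  naturality := by
    intro c c' φ
    have h := congrArg CommaMorphism.left (adj.unit.naturality φ)
    dsimp at h ⊢
    erw [Category.assoc, ← Arrow.w (L.map φ), reassoc_of% h]
    rfl

/-- The candidate left adjoint. -/
def Psi : Comma ((Functor.whiskeringRight A X Y).obj p) ((Functor.whiskeringLeft A B Y).obj F) ⥤
    Comma (𝟭 (A ⥤ X)) ((Functor.whiskeringLeft A B X).obj F) where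
  obj d :=
    { left := d.left
      right := (K F U adjF p).obj d ⋙ L ⋙ Arrow.rightFunc
      hom :=
        { app := fun a => d.left.map (adjF.unit.app a) ≫
            (delta p L adj).app (((K F U adjF p).obj d).obj (F.obj a))
          naturality := by
            intro a a' h
            have h1 := (delta p L adj).naturality (((K F U adjF p).obj d).map (F.map h))
            dsimp at h1 ⊢
            erw [Category.assoc, ← h1, ← d.left.map_comp_assoc, ← adjF.unit_naturality h,
              d.left.map_comp_assoc]
            rfl } }
  map {d d'} φ :=
    { left := φ.left
      right := Functor.whiskerRight ((K F U adjF p).map φ) (L ⋙ Arrow.rightFunc)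
      w := by
        ext a
        have h1 := (delta p L adj).naturality (((K F U adjF p).map φ).app (F.obj a))
        dsimp at h1 ⊢
        erw [Category.assoc, ← h1, ← φ.left.naturality_assoc]
        rfl }
  map_id := by
    intro d
    ext a
    · rfl
    · have e : ((K F U adjF p).map (𝟙 d)).app a = 𝟙 (((K F U adjF p).obj d).obj a) := rfl
      dsimp
      rw [e, L.map_id]
      rfl
  map_comp := by
    intro d d' d'' φ φ'
    ext a
    · rfl
    · have e : ((K F U adjF p).map (φ ≫ φ')).app a =
          ((K F U adjF p).map φ).app a ≫ ((K F U adjF p).map φ').app a := rfl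
      dsimp
      rw [e, L.map_comp]
      rfl

@[simp] lemma pcw_obj_left (e : Comma (𝟭 (A ⥤ X)) ((Functor.whiskeringLeft A B X).obj F)) :
    ((postcompWhisker F p).obj e).left = e.left := rfl

def unitPsi : 𝟭 (Comma ((Functor.whiskeringRight A X Y).obj p) ((Functor.whiskeringLeft A B Y).obj F)) ⟶
    Psi F U adjF p L adj ⋙ postcompWhisker F p where
  app d :=
    { left := 𝟙 d.left
      right :=
        { app := fun b => (adj.unit.app (((K F U adjF p).obj d).obj b)).right
          naturality := by
            intro b b' h
            have h1 := congrArg CommaMorphism.right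
              (adj.unit.naturality (((K F U adjF p).obj d).map h))
            dsimp at h1 ⊢
            exact h1 }
      w := by
        ext a
        have h1 := (adj.unit.app (((K F U adjF p).obj d).obj (F.obj a))).w
        have h2 := d.hom.naturality (adjF.unit.app a)
        dsimp [postcompWhisker, Psi, delta, toCocartComma] at h1 h2 ⊢
        erw [p.map_id, Category.id_comp, p.map_comp, p.map_comp, h1]
        dsimp [K]
        erw [← Category.assoc, ← Category.assoc, h2, Category.assoc, Category.assoc,
          ← d.right.map_comp_assoc, adjF.left_triangle_components,
          d.right.map_id, Category.id_comp] }
  naturality := by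
    intro d d' φ
    ext a
    · dsimp [postcompWhisker, Psi]
      rw [Category.id_comp, Category.comp_id]
    · have h1 := congrArg CommaMorphism.right (adj.unit.naturality (((K F U adjF p).map φ).app a))
      dsimp [postcompWhisker, Psi, toCocartComma] at h1 ⊢
      exact h1


@[simp] lemma toCocart_map_left {f g : Arrow X} (ψ : f ⟶ g) :
    ((toCocartComma p).map ψ).left = ψ.left := rfl

@[simp] lemma toCocart_map_right {f g : Arrow X} (ψ : f ⟶ g) :
    ((toCocartComma p).map ψ).right = p.map ψ.right := rfl

variable {F U} in
/-- The transposed arrow of an object of `C₁`. -/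
def ell (e : Comma (𝟭 (A ⥤ X)) ((Functor.whiskeringLeft A B X).obj F)) (b : B) : Arrow X :=
  Arrow.mk (e.hom.app (U.obj b) ≫ e.right.map (adjF.counit.app b))

variable {F U} in
def ellMap (e : Comma (𝟭 (A ⥤ X)) ((Functor.whiskeringLeft A B X).obj F)) {b b' : B} (h : b ⟶ b') :
    ell adjF e b ⟶ ell adjF e b' :=
  Arrow.homMk (u := e.left.map (U.map h)) (v := e.right.map h) (by
    dsimp [ell]
    have h1 := e.hom.naturality (U.map h)
    dsimp at h1
    rw [reassoc_of% h1, ← e.right.map_comp, adjF.counit_naturality h]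
    simp)

@[simp] lemma ellMap_left (e : Comma (𝟭 (A ⥤ X)) ((Functor.whiskeringLeft A B X).obj F)) {b b' : B} (h : b ⟶ b') :
    (ellMap adjF e h).left = e.left.map (U.map h) := rfl

@[simp] lemma ellMap_right (e : Comma (𝟭 (A ⥤ X)) ((Functor.whiskeringLeft A B X).obj F)) {b b' : B} (h : b ⟶ b') :
    (ellMap adjF e h).right = e.right.map h := rfl

variable {F U} in
def ellNat {e e' : Comma (𝟭 (A ⥤ X)) ((Functor.whiskeringLeft A B X).obj F)} (ψ : e ⟶ e') (b : B) :
    ell adjF e b ⟶ ell adjF e' b :=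
  Arrow.homMk (u := ψ.left.app (U.obj b)) (v := ψ.right.app b) (by
    dsimp [ell]
    have h1 := congr_app ψ.w (U.obj b)
    dsimp at h1
    have h2 := ψ.right.naturality (adjF.counit.app b)
    dsimp at h2
    rw [reassoc_of% h1, ← h2]
    simp)

@[simp] lemma ellNat_left {e e' : Comma (𝟭 (A ⥤ X)) ((Functor.whiskeringLeft A B X).obj F)} (ψ : e ⟶ e') (b : B) :
    (ellNat adjF ψ b).left = ψ.left.app (U.obj b) := rfl

@[simp] lemma ellNat_right {e e' : Comma (𝟭 (A ⥤ X)) ((Functor.whiskeringLeft A B X).obj F)} (ψ : e ⟶ e') (b : B) :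
    (ellNat adjF ψ b).right = ψ.right.app b := rfl

variable {F U} in
def idc (e : Comma (𝟭 (A ⥤ X)) ((Functor.whiskeringLeft A B X).obj F)) (b : B) :
    ((K F U adjF p).obj ((postcompWhisker F p).obj e)).obj b ⟶
      (toCocartComma p).obj (ell adjF e b) where
  left := 𝟙 _
  right := 𝟙 _
  w := by
    dsimp [K, postcompWhisker, toCocartComma, ell]
    rw [p.map_id, p.map_comp, Category.id_comp, Category.comp_id]

@[simp] lemma idc_left (e : Comma (𝟭 (A ⥤ X)) ((Functor.whiskeringLeft A B X).obj F)) (b : B) : (idc adjF p e b).left = 𝟙 _ := rfl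
@[simp] lemma idc_right (e : Comma (𝟭 (A ⥤ X)) ((Functor.whiskeringLeft A B X).obj F)) (b : B) : (idc adjF p e b).right = 𝟙 _ := rfl

/-- Key computation: the composite of `delta` with the counit-comparison equals the
transposed arrow. -/
lemma delta_idc (e : Comma (𝟭 (A ⥤ X)) ((Functor.whiskeringLeft A B X).obj F)) (b : B) :
    (delta p L adj).app (((K F U adjF p).obj ((postcompWhisker F p).obj e)).obj b) ≫
      (L.map (idc adjF p e b)).right ≫ (adj.counit.app (ell adjF e b)).right =
    (ell adjF e b).hom := by
  have h1 : (adj.unit.app ((toCocartComma p).obj (ell adjF e b))).left =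
      (adj.unit.app (((K F U adjF p).obj ((postcompWhisker F p).obj e)).obj b)).left ≫
        (L.map (idc adjF p e b)).left := by
    have := congrArg CommaMorphism.left (adj.unit.naturality (idc adjF p e b))
    simp only [Comma.comp_left, Comma.id_left, Functor.id_obj, Functor.id_map,
      Functor.comp_map, toCocart_map_left, idc_left, Category.id_comp] at this
    exact (Category.id_comp _).symm.trans this
  have h2 : (adj.unit.app ((toCocartComma p).obj (ell adjF e b))).left ≫
      (adj.counit.app (ell adjF e b)).left = 𝟙 _ := by
    have := congrArg CommaMorphism.left (adj.right_triangle_components (ell adjF e b))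
    simp only [Comma.comp_left, Comma.id_left, Functor.id_obj, toCocart_map_left] at this
    exact this
  have h3 := Arrow.w (L.map (idc adjF p e b))
  have h4 := Arrow.w (adj.counit.app (ell adjF e b))
  dsimp at h3 h4
  dsimp [delta]
  erw [Category.assoc, ← reassoc_of% h3, ← h4]
  calc _ = ((adj.unit.app (((K F U adjF p).obj ((postcompWhisker F p).obj e)).obj b)).left ≫
        (L.map (idc adjF p e b)).left) ≫ (adj.counit.app (ell adjF e b)).left ≫ (ell adjF e b).hom :=
      (Category.assoc _ _ _).symm
    _ = _ := by erw [← h1]; exact (Category.assoc _ _ _).symm.trans ((eq_whisker h2 _).trans (Category.id_comp _))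

lemma unit_idc (e : Comma (𝟭 (A ⥤ X)) ((Functor.whiskeringLeft A B X).obj F)) (b : B) :
    (adj.unit.app (((K F U adjF p).obj ((postcompWhisker F p).obj e)).obj b)).right ≫
      p.map ((L.map (idc adjF p e b)).right ≫ (adj.counit.app (ell adjF e b)).right) = 𝟙 _ := by
  have h1 : (adj.unit.app ((toCocartComma p).obj (ell adjF e b))).right =
      (adj.unit.app (((K F U adjF p).obj ((postcompWhisker F p).obj e)).obj b)).right ≫
        p.map (L.map (idc adjF p e b)).right := by
    have := congrArg CommaMorphism.right (adj.unit.naturality (idc adjF p e b))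
    simp only [Comma.comp_right, Comma.id_right, Functor.id_obj, Functor.id_map,
      Functor.comp_map, toCocart_map_right, idc_right, Category.id_comp] at this
    exact (Category.id_comp _).symm.trans this
  have h2 : (adj.unit.app ((toCocartComma p).obj (ell adjF e b))).right ≫
      p.map (adj.counit.app (ell adjF e b)).right = 𝟙 _ := by
    have := congrArg CommaMorphism.right (adj.right_triangle_components (ell adjF e b))
    simp only [Comma.comp_right, Comma.id_right, Functor.id_obj, toCocart_map_right] at this
    exact this
  erw [p.map_comp, ← Category.assoc, ← h1, h2]
  rfl

def counitPsi : postcompWhisker F p ⋙ Psi F U adjF p L adj ⟶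
    𝟭 (Comma (𝟭 (A ⥤ X)) ((Functor.whiskeringLeft A B X).obj F)) where
  app e :=
    { left := 𝟙 e.left
      right :=
        { app := fun b => (L.map (idc adjF p e b)).right ≫ (adj.counit.app (ell adjF e b)).right
          naturality := by
            intro b b' h
            have key : ((K F U adjF p).obj ((postcompWhisker F p).obj e)).map h ≫ idc adjF p e b'
                = idc adjF p e b ≫ (toCocartComma p).map (ellMap adjF e h) := by
              ext
              · dsimp [K, postcompWhisker, ellMap, toCocartComma, idc]
                erw [Category.comp_id, Category.id_comp]; rfl
              · dsimp [K, postcompWhisker, ellMap, toCocartComma, idc]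
                erw [Category.comp_id, Category.id_comp]; rfl
            have h2 := congrArg CommaMorphism.right (adj.counit.naturality (ellMap adjF e h))
            simp only [Arrow.comp_right, Functor.comp_map, toCocart_map_right, Functor.id_map,
              ellMap_right] at h2
            dsimp [Psi]
            erw [← Category.assoc, ← Comma.comp_right, ← L.map_comp, key, L.map_comp,
              Comma.comp_right, Category.assoc, h2, ← Category.assoc]; rfl }
      w := by
        ext a
        have h5 := e.hom.naturality (adjF.unit.app a)
        dsimp [Psi] at h5 ⊢
        simp only [NatTrans.id_app, Functor.id_map, Category.id_comp, pcw_obj_left F p]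
        erw [Category.assoc, delta_idc]
        dsimp [ell]
        rw [reassoc_of% h5, ← e.right.map_comp, adjF.left_triangle_components,
          e.right.map_id, Category.comp_id] }
  naturality := by
    intro e e' ψ
    ext x
    · dsimp [Psi, postcompWhisker]
      rw [Category.id_comp, Category.comp_id]
    · have key : ((K F U adjF p).map ((postcompWhisker F p).map ψ)).app x ≫ idc adjF p e' x
          = idc adjF p e x ≫ (toCocartComma p).map (ellNat adjF ψ x) := by
        ext
        · dsimp [K, postcompWhisker, ellNat, toCocartComma, idc]
          erw [Category.comp_id, Category.id_comp]; rfl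
        · dsimp [K, postcompWhisker, ellNat, toCocartComma, idc]
          erw [Category.comp_id, Category.id_comp]; rfl
      have h2 := congrArg CommaMorphism.right (adj.counit.naturality (ellNat adjF ψ x))
      simp only [Arrow.comp_right, Functor.comp_map, toCocart_map_right, Functor.id_map,
        ellNat_right] at h2
      dsimp [Psi]
      erw [← Category.assoc, ← Comma.comp_right, ← L.map_comp, key, L.map_comp,
        Comma.comp_right, Category.assoc, h2, ← Category.assoc]; rfl

lemma ell_psi_hom (d) (b : B) :
    (ell adjF ((Psi F U adjF p L adj).obj d) b).hom =
      (delta p L adj).app (((K F U adjF p).obj d).obj b) := by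
  have h1 := (delta p L adj).naturality (((K F U adjF p).obj d).map (adjF.counit.app b))
  dsimp [ell, Psi] at h1 ⊢
  erw [Category.assoc, ← h1]
  dsimp [K]
  erw [← d.left.map_comp_assoc, adjF.right_triangle_components, d.left.map_id, Category.id_comp]

instance unit_left_isIso [IsIso adj.unit] (c : Comma p (𝟭 Y)) : IsIso (adj.unit.app c).left :=
  inferInstanceAs (IsIso ((Comma.fst p (𝟭 Y)).map (adj.unit.app c)))

instance unit_right_isIso [IsIso adj.unit] (c : Comma p (𝟭 Y)) : IsIso (adj.unit.app c).right :=
  inferInstanceAs (IsIso ((Comma.snd p (𝟭 Y)).map (adj.unit.app c)))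

instance unit_left_isIso' [IsIso adj.unit] (c : Comma p (𝟭 Y)) :
    @IsIso X _ c.left (L.obj c).left (adj.unit.app c).left :=
  inferInstanceAs (IsIso ((Comma.fst p (𝟭 Y)).map (adj.unit.app c)))

instance unit_right_isIso' [IsIso adj.unit] (c : Comma p (𝟭 Y)) :
    @IsIso Y _ c.right (p.obj (L.obj c).right) (adj.unit.app c).right :=
  inferInstanceAs (IsIso ((Comma.snd p (𝟭 Y)).map (adj.unit.app c)))

instance unit_left_isIso_rho [IsIso adj.unit] (d) (b : B) :
    @IsIso X _ (ell adjF ((Psi F U adjF p L adj).obj d) b).left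
      (L.obj (((K F U adjF p).obj d).obj b)).left (adj.unit.app (((K F U adjF p).obj d).obj b)).left :=
  inferInstanceAs (IsIso ((Comma.fst p (𝟭 Y)).map (adj.unit.app (((K F U adjF p).obj d).obj b))))

noncomputable def rho [IsIso adj.unit] (d) (b : B) :
    L.obj (((K F U adjF p).obj d).obj b) ⟶ ell adjF ((Psi F U adjF p L adj).obj d) b where
  left := inv ((adj.unit.app (((K F U adjF p).obj d).obj b)).left)
  right := 𝟙 _
  w := by
    dsimp
    erw [Category.comp_id]
    refine (congrArg (inv (adj.unit.app (((K F U adjF p).obj d).obj b)).left ≫ ·)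
      (ell_psi_hom F U adjF p L adj d b)).trans ?_
    dsimp [delta]
    erw [IsIso.inv_hom_id_assoc]

@[simp] lemma rho_left [IsIso adj.unit] (d) (b : B) :
    (rho F U adjF p L adj d b).left =
      inv ((adj.unit.app (((K F U adjF p).obj d).obj b)).left) := rfl

@[simp] lemma rho_right [IsIso adj.unit] (d) (b : B) :
    (rho F U adjF p L adj d b).right = 𝟙 _ := rfl

noncomputable def adjPsi [IsIso adj.unit] : Psi F U adjF p L adj ⊣ postcompWhisker F p where
  unit := unitPsi F U adjF p L adj
  counit := counitPsi F U adjF p L adj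
  left_triangle_components := by
    intro d
    ext b
    · dsimp [Psi, unitPsi, counitPsi]
      rw [Category.id_comp]
    · have key : ((K F U adjF p).map ((unitPsi F U adjF p L adj).app d)).app b ≫
          idc adjF p ((Psi F U adjF p L adj).obj d) b =
            adj.unit.app (((K F U adjF p).obj d).obj b) ≫
              (toCocartComma p).map (rho F U adjF p L adj d b) := by
        ext
        · dsimp [K, unitPsi, toCocartComma, idc]
          erw [Category.comp_id, IsIso.hom_inv_id]
        · dsimp [K, unitPsi, toCocartComma, idc]
          erw [Category.comp_id, p.map_id, Category.comp_id]
      have h2 := congrArg CommaMorphism.right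
        (adj.counit.naturality (rho F U adjF p L adj d b))
      simp only [Arrow.comp_right, Functor.comp_map, Functor.id_map, rho_right] at h2
      have h3 := congrArg CommaMorphism.right
        (adj.left_triangle_components (((K F U adjF p).obj d).obj b))
      simp only [Arrow.comp_right, Comma.id_right] at h3
      show (L.map (((K F U adjF p).map ((unitPsi F U adjF p L adj).app d)).app b)).right ≫
          (L.map (idc adjF p ((Psi F U adjF p L adj).obj d) b)).right ≫
            (adj.counit.app (ell adjF ((Psi F U adjF p L adj).obj d) b)).right = 𝟙 _
      erw [← Category.assoc, ← Comma.comp_right, ← L.map_comp, key, L.map_comp,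
        Comma.comp_right, Category.assoc, h2]
      have h4 : (adj.counit.app (L.obj (((K F U adjF p).obj d).obj b))).right ≫
          𝟙 ((L.obj (((K F U adjF p).obj d).obj b)).right) =
            (adj.counit.app (L.obj (((K F U adjF p).obj d).obj b))).right := Category.comp_id _
      erw [h4, h3]; rfl
  right_triangle_components := by
    intro e
    ext a
    · dsimp [Psi, unitPsi, counitPsi, postcompWhisker]
      rw [Category.id_comp]
    · show (adj.unit.app (((K F U adjF p).obj ((postcompWhisker F p).obj e)).obj a)).right ≫
          p.map ((L.map (idc adjF p e a)).right ≫ (adj.counit.app (ell adjF e a)).right) = 𝟙 _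
      exact unit_idc F U adjF p L adj e a

lemma comma_isIso {A' B' T' : Type u} [Category.{v} A'] [Category.{v} B'] [Category.{v} T']
    {L' : A' ⥤ T'} {R' : B' ⥤ T'} {c c' : Comma L' R'} (m : c ⟶ c')
    [IsIso m.left] [IsIso m.right] : IsIso m := by
  refine ⟨⟨{ left := inv m.left, right := inv m.right, w := ?_ }, ?_, ?_⟩⟩
  · rw [Functor.map_inv, Functor.map_inv, IsIso.inv_comp_eq, ← Category.assoc, m.w,
      Category.assoc, IsIso.hom_inv_id, Category.comp_id]
  · ext <;> simp
  · ext <;> simp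

lemma isIso_unitPsi [IsIso adj.unit] : IsIso (unitPsi F U adjF p L adj) := by
  have : ∀ d, IsIso ((unitPsi F U adjF p L adj).app d) := by
    intro d
    haveI h1 : IsIso ((unitPsi F U adjF p L adj).app d).left := by
      dsimp [unitPsi]; exact IsIso.id _
    haveI h2 : ∀ b, IsIso (((unitPsi F U adjF p L adj).app d).right.app b) := by
      intro b
      dsimp [unitPsi]
      exact unit_right_isIso p L adj _
    haveI h3 : IsIso ((unitPsi F U adjF p L adj).app d).right :=
      NatIso.isIso_of_isIso_app _
    exact comma_isIso _
  exact NatIso.isIso_of_isIso_app _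

end Aux

/-- Let `F : A ⥤ B` admit a right adjoint and let `p : X ⥤ Y` be a
cocartesian fibration. Then the functor `Φ` sending `(S, L, α : S ⟶ L ∘ F)` to
`(S, p ∘ L, p·α : p ∘ S ⟶ (p ∘ L) ∘ F)` admits a fully faithful left adjoint. -/
theorem statement3 (F : A ⥤ B) (U : B ⥤ A) (adjF : F ⊣ U)
    (p : X ⥤ Y) (hp : IsCocartesianFibration p) :
    ∃ (Ψ : Comma ((Functor.whiskeringRight A X Y).obj p) ((Functor.whiskeringLeft A B Y).obj F) ⥤
        Comma (𝟭 (A ⥤ X)) ((Functor.whiskeringLeft A B X).obj F))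
      (adj : Ψ ⊣ postcompWhisker F p), IsIso adj.unit := by
  obtain ⟨L, adj, hu⟩ := hp
  haveI := hu
  exact ⟨Psi F U adjF p L adj, adjPsi F U adjF p L adj, isIso_unitPsi F U adjF p L adj⟩

end Paper
end

section
/- Let p : A ⥤ J and q : B ⥤ J be functors, let F : A ⥤ B satisfy q ∘ F = p, and let U : B ⥤ A satisfy p ∘ U = q, and suppose F is left adjoint to U over J: there is an adjunction F ⊣ U whose unit η : 𝟭_A ⟶ U ∘ F and counit ε : F ∘ U ⟶ 𝟭_B are natural transformations over J, i.e. the whiskerings p·η : p ⟶ p and q·ε : q ⟶ q are the identity natural transformations. Then for any functor t : I ⥤ J, forming the strict pullbacks I ×_J A and I ×_J B in Cat, the induced functors I ×_J F : I ×_J A ⥤ I ×_J B and I ×_J U : I ×_J B ⥤ I ×_J A over I satisfy: I ×_J F is left adjoint to I ×_J U over I, with unit and counit obtained by pulling back η and ε (in particular the pulled back unit and counit project to identities over I). -/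
open CategoryTheory

universe v u

namespace Paper

/-- The strict pullback of two functors `t : I ⥤ J` and `p : A ⥤ J` in `Cat`, realized as
the full subcategory of the comma category `Comma t p` on those objects whose structure
morphism is an `eqToHom`. -/
abbrev CatPB {I J A : Type*} [Category I] [Category J] [Category A]
    (t : I ⥤ J) (p : A ⥤ J) :=
  ObjectProperty.FullSubcategory (fun c : Comma t p => ∃ h : t.obj c.left = p.obj c.right, c.hom = eqToHom h)

/-- First projection `I ×_J A ⥤ I`. -/
def CatPB.fst {I J A : Type*} [Category I] [Category J] [Category A]
    (t : I ⥤ J) (p : A ⥤ J) : CatPB t p ⥤ I :=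
  ObjectProperty.ι _ ⋙ Comma.fst t p

/-- Second projection `I ×_J A ⥤ A`. -/
def CatPB.snd {I J A : Type*} [Category I] [Category J] [Category A]
    (t : I ⥤ J) (p : A ⥤ J) : CatPB t p ⥤ A :=
  ObjectProperty.ι _ ⋙ Comma.snd t p

/-- The functor `I ×_J F : I ×_J A ⥤ I ×_J B` induced on strict pullbacks by a functor
`F : A ⥤ B` over `J`. -/
def CatPB.lift {I J A B : Type*} [Category I] [Category J] [Category A] [Category B]
    (t : I ⥤ J) {p : A ⥤ J} {q : B ⥤ J} (F : A ⥤ B) (hF : F ⋙ q = p) :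
    CatPB t p ⥤ CatPB t q where
  obj c :=
    ⟨{ left := c.obj.left
       right := F.obj c.obj.right
       hom := c.obj.hom ≫ eqToHom (Functor.congr_obj hF c.obj.right).symm },
      by
        obtain ⟨h₀, hh⟩ := c.property
        exact ⟨h₀.trans (Functor.congr_obj hF c.obj.right).symm, by rw [hh, eqToHom_trans]⟩⟩
  map {c c'} φ :=
    ⟨{ left := φ.hom.left
       right := F.map φ.hom.right
       w := by
        have hq := Functor.congr_hom hF φ.hom.right
        simp only [Functor.comp_map] at hq
        simp only [hq, Category.assoc, eqToHom_trans_assoc, eqToHom_refl, Category.id_comp]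
        rw [← Category.assoc, φ.hom.w, Category.assoc] }⟩
  map_id c := by
    apply ObjectProperty.hom_ext
    apply CommaMorphism.ext
    · rfl
    · exact F.map_id c.obj.right
  map_comp f g := by
    apply ObjectProperty.hom_ext
    apply CommaMorphism.ext
    · rfl
    · exact F.map_comp f.hom.right g.hom.right

/-- Let `F : A ⥤ B` be left adjoint to `U : B ⥤ A` over `J` (both functors
over `J`, and the whiskerings of the unit and counit with the structure functors to `J` are
identities). Then for any `t : I ⥤ J`, the pulled back functor `I ×_J F` is left adjoint
to `I ×_J U` over `I`, with unit and counit obtained by pulling back the original ones; in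
particular the pulled back unit and counit project to identities over `I`. -/
theorem statement6 {I J A B : Type u}
    [Category.{v} I] [Category.{v} J] [Category.{v} A] [Category.{v} B]
    (p : A ⥤ J) (q : B ⥤ J) (F : A ⥤ B) (U : B ⥤ A)
    (hF : F ⋙ q = p) (hU : U ⋙ p = q) (adj : F ⊣ U)
    (hunit : Functor.whiskerRight adj.unit p =
      eqToHom (by rw [Functor.id_comp, Functor.assoc, hU, hF]))
    (hcounit : Functor.whiskerRight adj.counit q =
      eqToHom (by rw [Functor.id_comp, Functor.assoc, hF, hU]))
    (t : I ⥤ J) :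
    ∃ adj' : CatPB.lift t F hF ⊣ CatPB.lift t U hU,
      (∀ h : CatPB.snd t p ⋙ (F ⋙ U) = (CatPB.lift t F hF ⋙ CatPB.lift t U hU) ⋙ CatPB.snd t p,
        Functor.whiskerRight adj'.unit (CatPB.snd t p) =
          Functor.whiskerLeft (CatPB.snd t p) adj.unit ≫ eqToHom h) ∧
      (∀ h : (CatPB.lift t U hU ⋙ CatPB.lift t F hF) ⋙ CatPB.snd t q = CatPB.snd t q ⋙ (U ⋙ F),
        Functor.whiskerRight adj'.counit (CatPB.snd t q) =
          eqToHom h ≫ Functor.whiskerLeft (CatPB.snd t q) adj.counit) ∧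
      (∀ h : 𝟭 (CatPB t p) ⋙ CatPB.fst t p = (CatPB.lift t F hF ⋙ CatPB.lift t U hU) ⋙ CatPB.fst t p,
        Functor.whiskerRight adj'.unit (CatPB.fst t p) = eqToHom h) ∧
      (∀ h : (CatPB.lift t U hU ⋙ CatPB.lift t F hF) ⋙ CatPB.fst t q = 𝟭 (CatPB t q) ⋙ CatPB.fst t q,
        Functor.whiskerRight adj'.counit (CatPB.fst t q) = eqToHom h) := by
  have hunit' : ∀ x : A, p.map (adj.unit.app x) =
      eqToHom (Functor.congr_obj (show 𝟭 A ⋙ p = (F ⋙ U) ⋙ p from by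
        rw [Functor.id_comp, Functor.assoc, hU, hF]) x) := by
    intro x
    have := NatTrans.congr_app hunit x
    simpa using this
  have hcounit' : ∀ x : B, q.map (adj.counit.app x) =
      eqToHom (Functor.congr_obj (show (U ⋙ F) ⋙ q = 𝟭 B ⋙ q from by
        rw [Functor.id_comp, Functor.assoc, hF, hU]) x) := by
    intro x
    have := NatTrans.congr_app hcounit x
    simpa using this
  let unit' : 𝟭 (CatPB t p) ⟶ CatPB.lift t F hF ⋙ CatPB.lift t U hU :=
    { app := fun c =>
        ⟨{left := 𝟙 c.obj.left
          right := adj.unit.app c.obj.right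
          w := by
            simp [CatPB.lift, hunit' c.obj.right] }⟩
      naturality := fun c c' φ => by
        apply ObjectProperty.hom_ext
        apply CommaMorphism.ext
        · show φ.hom.left ≫ 𝟙 c'.obj.left = 𝟙 c.obj.left ≫ φ.hom.left
          simp
        · exact adj.unit.naturality φ.hom.right }
  let counit' : CatPB.lift t U hU ⋙ CatPB.lift t F hF ⟶ 𝟭 (CatPB t q) :=
    { app := fun c =>
        ⟨{left := 𝟙 c.obj.left
          right := adj.counit.app c.obj.right
          w := by
            simp [CatPB.lift, hcounit' c.obj.right] }⟩
      naturality := fun c c' φ => by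
        apply ObjectProperty.hom_ext
        apply CommaMorphism.ext
        · show φ.hom.left ≫ 𝟙 c'.obj.left = 𝟙 c.obj.left ≫ φ.hom.left
          simp
        · exact adj.counit.naturality φ.hom.right }
  let adj' : CatPB.lift t F hF ⊣ CatPB.lift t U hU :=
    { unit := unit'
      counit := counit'
      left_triangle_components := fun c => by
        apply ObjectProperty.hom_ext
        apply CommaMorphism.ext
        · show 𝟙 c.obj.left ≫ 𝟙 c.obj.left = 𝟙 c.obj.left
          simp
        · exact adj.left_triangle_components c.obj.right
      right_triangle_components := fun c => by
        apply ObjectProperty.hom_ext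
        apply CommaMorphism.ext
        · show 𝟙 c.obj.left ≫ 𝟙 c.obj.left = 𝟙 c.obj.left
          simp
        · exact adj.right_triangle_components c.obj.right }
  refine ⟨adj', ?_, ?_, ?_, ?_⟩
  · intro h
    ext x
    show adj.unit.app x.obj.right = adj.unit.app x.obj.right ≫ (eqToHom h).app x
    rw [eqToHom_app]
    exact (Category.comp_id _).symm
  · intro h
    ext x
    show adj.counit.app x.obj.right = (eqToHom h).app x ≫ adj.counit.app x.obj.right
    rw [eqToHom_app]
    exact (Category.id_comp _).symm
  · intro h
    ext x
    show 𝟙 x.obj.left = (eqToHom h).app x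
    rw [eqToHom_app]
    rfl
  · intro h
    ext x
    show 𝟙 x.obj.left = (eqToHom h).app x
    rw [eqToHom_app]
    rfl

end Paper
end

section
/- Let p : A ⥤ I be a cocartesian fibration. Then the induced functor p∗ : Arrow A ⥤ Arrow I on arrow categories is a cocartesian fibration, and for each i ∈ {0,1} the evaluation functor ev_i : Arrow A ⥤ A is a cocartesian functor over ev_i : Arrow I ⥤ I, with respect to the cocartesian fibrations p∗ and p. -/
open CategoryTheory

universe v u

namespace Paper

/-- The mate of a strictly commutative square `m ⋙ b = a ⋙ n` in which the two functors
`a` and `b` admit left adjoints `a'` resp. `b'`. -/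
def mateRR {A X Y B : Type*} [Category A] [Category X] [Category Y] [Category B]
    {a : X ⥤ A} {a' : A ⥤ X} {b : Y ⥤ B} {b' : B ⥤ Y} {m : X ⥤ Y} {n : A ⥤ B}
    (adja : a' ⊣ a) (adjb : b' ⊣ b) (hsq : m ⋙ b = a ⋙ n) : n ⋙ b' ⟶ a' ⋙ m :=
  Functor.whiskerRight adja.unit (n ⋙ b') ≫
    eqToHom (by
      simp only [Functor.assoc]
      rw [← Functor.assoc a n b', ← hsq]
      simp only [Functor.assoc]) ≫
    Functor.whiskerLeft (a' ⋙ m) adjb.counit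

/-- The functor `Comma p (𝟭 A) ⥤ Comma q (𝟭 B)`, `(x, g) ↦ (F.obj x, G.map g)`. -/
def commaMapCocart {X A Y B : Type*} [Category X] [Category A] [Category Y] [Category B]
    (p : X ⥤ A) (q : Y ⥤ B) (F : X ⥤ Y) (G : A ⥤ B)
    (h : F ⋙ q = p ⋙ G) : Comma p (𝟭 A) ⥤ Comma q (𝟭 B) where
  obj c :=
    { left := F.obj c.left
      right := G.obj c.right
      hom := eqToHom (Functor.congr_obj h c.left) ≫ G.map c.hom }
  map {c c'} φ :=
    { left := F.map φ.left
      right := G.map φ.right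
      w := by
        have hh := Functor.congr_hom h φ.left
        have hw := φ.w
        simp only [Functor.comp_map] at hh
        simp only [Functor.id_map] at hw ⊢
        rw [hh]
        simp only [Category.assoc, eqToHom_trans_assoc, eqToHom_refl, Category.id_comp]
        rw [← G.map_comp, ← G.map_comp, hw] }

/-- `F` is a cocartesian functor over `G` if the induced square relating the two comparison
functors is adjointable with respect to the cocartesian-lift left adjoints. -/
def IsCocartesianFunctor {X A Y B : Type*} [Category X] [Category A] [Category Y] [Category B]
    (p : X ⥤ A) (q : Y ⥤ B) (F : X ⥤ Y) (G : A ⥤ B)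
    (h : F ⋙ q = p ⋙ G) : Prop :=
  ∃ (Lp : Comma p (𝟭 A) ⥤ Arrow X) (adjp : Lp ⊣ toCocartComma p)
    (Lq : Comma q (𝟭 B) ⥤ Arrow Y) (adjq : Lq ⊣ toCocartComma q)
    (_ : IsIso adjp.unit) (_ : IsIso adjq.unit)
    (hsq : F.mapArrow ⋙ toCocartComma q = toCocartComma p ⋙ commaMapCocart p q F G h),
    IsIso (mateRR adjp adjq hsq)


lemma comma_isIso_s10 {C D E : Type*} [Category C] [Category D] [Category E]
    {F : C ⥤ E} {G : D ⥤ E} {X Y : Comma F G} (f : X ⟶ Y)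
    (hl : IsIso f.left) (hr : IsIso f.right) : IsIso f := by
  refine ⟨⟨⟨inv f.left, inv f.right, ?_⟩, ?_, ?_⟩⟩
  · rw [Functor.map_inv, Functor.map_inv, IsIso.inv_comp_eq, ← Category.assoc,
      IsIso.eq_comp_inv]
    exact f.w.symm
  · ext <;> simp
  · ext <;> simp

lemma comma_obj_ext {C D E : Type*} [Category C] [Category D] [Category E]
    {F : C ⥤ E} {G : D ⥤ E} {X Y : Comma F G}
    (hl : X.left = Y.left) (hr : X.right = Y.right)
    (hh : X.hom ≫ eqToHom (congrArg G.obj hr) = eqToHom (congrArg F.obj hl) ≫ Y.hom) :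
    X = Y := by
  obtain ⟨xl, xr, xh⟩ := X
  obtain ⟨yl, yr, yh⟩ := Y
  dsimp at hl hr
  subst hl; subst hr
  simp only [eqToHom_refl, Category.comp_id, Category.id_comp] at hh
  rw [hh]

variable {A I : Type u} [Category.{v} A] [Category.{v} I]

variable (p : A ⥤ I)

/-- domain part of an object of `Comma p.mapArrow (𝟭 (Arrow I))`. -/
def eDom (c : Comma p.mapArrow (𝟭 (Arrow I))) : Comma p (𝟭 I) where
  left := c.left.left
  right := c.right.left
  hom := c.hom.left

/-- codomain part. -/
def eCod (c : Comma p.mapArrow (𝟭 (Arrow I))) : Comma p (𝟭 I) where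
  left := c.left.right
  right := c.right.right
  hom := c.hom.right

def eMor (c : Comma p.mapArrow (𝟭 (Arrow I))) : eDom p c ⟶ eCod p c where
  left := c.left.hom
  right := c.right.hom
  w := by
    have h := c.hom.w
    exact h.symm

/-- The identification `Comma p.mapArrow (𝟭 (Arrow I)) ⥤ Arrow (Comma p (𝟭 I))`. -/
def eFun : Comma p.mapArrow (𝟭 (Arrow I)) ⥤ Arrow (Comma p (𝟭 I)) where
  obj c := Arrow.mk (eMor p c)
  map {c c'} φ :=
    { left :=
        { left := φ.left.left
          right := φ.right.left
          w := by
            have h := congrArg CommaMorphism.left φ.w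
            exact h }
      right :=
        { left := φ.left.right
          right := φ.right.right
          w := by
            have h := congrArg CommaMorphism.right φ.w
            exact h }
      w := by
        ext
        · have h := φ.left.w
          exact h
        · have h := φ.right.w
          exact h }

/-- Transposition `Arrow (Arrow A) ⥤ Arrow (Arrow A)`. -/
def tFun : Arrow (Arrow A) ⥤ Arrow (Arrow A) where
  obj η :=
    { left := Arrow.mk η.hom.left
      right := Arrow.mk η.hom.right
      hom :=
        { left := η.left.hom
          right := η.right.hom
          w := by
            have h := η.hom.w
            simpa using h.symm } }
  map {η η'} ρ :=
    { left :=
        { left := ρ.left.left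
          right := ρ.right.left
          w := by
            have h := congrArg CommaMorphism.left ρ.w
            exact h }
      right :=
        { left := ρ.left.right
          right := ρ.right.right
          w := by
            have h := congrArg CommaMorphism.right ρ.w
            exact h }
      w := by
        ext
        · have h := ρ.left.w
          exact h
        · have h := ρ.right.w
          exact h }

variable (L : Comma p (𝟭 I) ⥤ Arrow A)

/-- The candidate left adjoint of `toCocartComma p.mapArrow`. -/
def liftFun : Comma p.mapArrow (𝟭 (Arrow I)) ⥤ Arrow (Arrow A) :=
  eFun p ⋙ L.mapArrow ⋙ tFun

variable (adj : L ⊣ toCocartComma p)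

def upUnitApp (c : Comma p.mapArrow (𝟭 (Arrow I))) :
    c ⟶ (toCocartComma p.mapArrow).obj ((liftFun p L).obj c) where
  left :=
    { left := (adj.unit.app (eDom p c)).left
      right := (adj.unit.app (eCod p c)).left
      w := by
        have h := congrArg CommaMorphism.left (adj.unit.naturality (eMor p c))
        simp only [Comma.comp_left, Functor.id_map, Functor.comp_map] at h
        exact h.symm }
  right :=
    { left := (adj.unit.app (eDom p c)).right
      right := (adj.unit.app (eCod p c)).right
      w := by
        have h := congrArg CommaMorphism.right (adj.unit.naturality (eMor p c))
        simp only [Comma.comp_right, Functor.id_map, Functor.comp_map] at h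
        exact h.symm }
  w := by
    ext
    · have h := (adj.unit.app (eDom p c)).w
      simp only [Functor.id_map] at h
      exact h
    · have h := (adj.unit.app (eCod p c)).w
      simp only [Functor.id_map] at h
      exact h

def upUnit : 𝟭 (Comma p.mapArrow (𝟭 (Arrow I))) ⟶
    liftFun p L ⋙ toCocartComma p.mapArrow where
  app := upUnitApp p L adj
  naturality {c c'} φ := by
    have h1 := adj.unit.naturality ((eFun p).map φ).left
    have h2 := adj.unit.naturality ((eFun p).map φ).right
    have h1l := congrArg CommaMorphism.left h1
    have h1r := congrArg CommaMorphism.right h1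
    have h2l := congrArg CommaMorphism.left h2
    have h2r := congrArg CommaMorphism.right h2
    ext
    · exact h1l
    · exact h2l
    · exact h1r
    · exact h2r

def upCounitApp (φ : Arrow (Arrow A)) :
    (liftFun p L).obj ((toCocartComma p.mapArrow).obj φ) ⟶ φ where
  left :=
    { left := (adj.counit.app (Arrow.mk φ.hom.left)).left
      right := (adj.counit.app (Arrow.mk φ.hom.right)).left
      w := by
        have h := congrArg CommaMorphism.left
          (adj.counit.naturality ((tFun.obj φ).hom))
        simp only [Comma.comp_left, Functor.id_map, Functor.comp_map] at h
        exact h.symm }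
  right :=
    { left := (adj.counit.app (Arrow.mk φ.hom.left)).right
      right := (adj.counit.app (Arrow.mk φ.hom.right)).right
      w := by
        have h := congrArg CommaMorphism.right
          (adj.counit.naturality ((tFun.obj φ).hom))
        simp only [Comma.comp_right, Functor.id_map, Functor.comp_map] at h
        exact h.symm }
  w := by
    have h0 := (adj.counit.app (Arrow.mk φ.hom.left)).w
    have h1 := (adj.counit.app (Arrow.mk φ.hom.right)).w
    ext
    · exact h0
    · exact h1

def upCounit : (toCocartComma p.mapArrow) ⋙ liftFun p L ⟶ 𝟭 (Arrow (Arrow A)) where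
  app := upCounitApp p L adj
  naturality {φ φ'} ρ := by
    have h1 := adj.counit.naturality ((tFun.map ρ).left)
    have h2 := adj.counit.naturality ((tFun.map ρ).right)
    have h1l := congrArg CommaMorphism.left h1
    have h1r := congrArg CommaMorphism.right h1
    have h2l := congrArg CommaMorphism.left h2
    have h2r := congrArg CommaMorphism.right h2
    ext
    · exact h1l
    · exact h2l
    · exact h1r
    · exact h2r

def upAdj : liftFun p L ⊣ toCocartComma p.mapArrow where
  unit := upUnit p L adj
  counit := upCounit p L adj
  left_triangle_components c := by
    have h0 := adj.left_triangle_components (eDom p c)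
    have h1 := adj.left_triangle_components (eCod p c)
    have h0l := congrArg CommaMorphism.left h0
    have h0r := congrArg CommaMorphism.right h0
    have h1l := congrArg CommaMorphism.left h1
    have h1r := congrArg CommaMorphism.right h1
    ext
    · exact h0l
    · exact h1l
    · exact h0r
    · exact h1r
  right_triangle_components φ := by
    have h0 := adj.right_triangle_components (Arrow.mk φ.hom.left)
    have h1 := adj.right_triangle_components (Arrow.mk φ.hom.right)
    have h0l := congrArg CommaMorphism.left h0
    have h0r := congrArg CommaMorphism.right h0
    have h1l := congrArg CommaMorphism.left h1
    have h1r := congrArg CommaMorphism.right h1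
    ext
    · exact h0l
    · exact h1l
    · exact h0r
    · exact h1r

lemma upUnit_isIso (hu : IsIso adj.unit) : IsIso (upAdj p L adj).unit := by
  show IsIso (upUnit p L adj)
  haveI : ∀ c, IsIso ((upUnit p L adj).app c) := by
    intro c
    haveI hD : IsIso (adj.unit.app (eDom p c)) := inferInstance
    haveI hC : IsIso (adj.unit.app (eCod p c)) := inferInstance
    refine comma_isIso_s10 _ (comma_isIso_s10 _ ?_ ?_) (comma_isIso_s10 _ ?_ ?_)
    · exact inferInstanceAs (IsIso ((adj.unit.app (eDom p c)).left))
    · exact inferInstanceAs (IsIso ((adj.unit.app (eCod p c)).left))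
    · exact inferInstanceAs (IsIso ((adj.unit.app (eDom p c)).right))
    · exact inferInstanceAs (IsIso ((adj.unit.app (eCod p c)).right))
  exact NatIso.isIso_of_isIso_app _

lemma hsq0 : (Arrow.leftFunc : Arrow A ⥤ A).mapArrow ⋙ toCocartComma p =
    toCocartComma p.mapArrow ⋙ commaMapCocart p.mapArrow p Arrow.leftFunc Arrow.leftFunc rfl := by
  have hobj : ∀ φ : Arrow (Arrow A), ((Arrow.leftFunc : Arrow A ⥤ A).mapArrow ⋙ toCocartComma p).obj φ =
      (toCocartComma p.mapArrow ⋙ commaMapCocart p.mapArrow p Arrow.leftFunc Arrow.leftFunc rfl).obj φ := by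
    intro φ
    refine comma_obj_ext rfl rfl ?_
    erw [eqToHom_refl, eqToHom_refl, Category.comp_id, Category.id_comp]
    exact (Category.id_comp _).symm
  refine CategoryTheory.Functor.ext hobj (fun X Y f => ?_)
  ext
  · erw [Comma.comp_left, Comma.comp_left, Comma.eqToHom_left, Comma.eqToHom_left, eqToHom_refl, eqToHom_refl,
      Category.id_comp, Category.comp_id]
    rfl
  · erw [Comma.comp_right, Comma.comp_right, Comma.eqToHom_right, Comma.eqToHom_right, eqToHom_refl, eqToHom_refl,
      Category.id_comp, Category.comp_id]
    rfl

lemma hn0 : commaMapCocart p.mapArrow p Arrow.leftFunc Arrow.leftFunc rfl =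
    eFun p ⋙ (Arrow.leftFunc : Arrow (Comma p (𝟭 I)) ⥤ Comma p (𝟭 I)) := by
  have hobj : ∀ c, (commaMapCocart p.mapArrow p Arrow.leftFunc Arrow.leftFunc rfl).obj c =
      (eFun p ⋙ Arrow.leftFunc).obj c := by
    intro c
    refine comma_obj_ext rfl rfl ?_
    erw [eqToHom_refl, eqToHom_refl, Category.comp_id, Category.id_comp]
    exact Category.id_comp _
  refine CategoryTheory.Functor.ext hobj (fun X Y f => ?_)
  ext
  · erw [Comma.comp_left, Comma.comp_left, Comma.eqToHom_left, Comma.eqToHom_left, eqToHom_refl, eqToHom_refl,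
      Category.id_comp, Category.comp_id]
    rfl
  · erw [Comma.comp_right, Comma.comp_right, Comma.eqToHom_right, Comma.eqToHom_right, eqToHom_refl, eqToHom_refl,
      Category.id_comp, Category.comp_id]
    rfl

lemma hL0' : (eFun p ⋙ (Arrow.leftFunc : Arrow (Comma p (𝟭 I)) ⥤ Comma p (𝟭 I))) ⋙ L =
    liftFun p L ⋙ (Arrow.leftFunc : Arrow A ⥤ A).mapArrow :=
  CategoryTheory.Functor.ext (fun c => rfl) (fun X Y f => by erw [eqToHom_refl, eqToHom_refl, Category.id_comp, Category.comp_id]; rfl)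

lemma hL0 : commaMapCocart p.mapArrow p Arrow.leftFunc Arrow.leftFunc rfl ⋙ L =
    liftFun p L ⋙ (Arrow.leftFunc : Arrow A ⥤ A).mapArrow := by
  rw [hn0]; exact hL0' p L

lemma tri_conj {C D : Type*} [Category C] [Category D] {F : C ⥤ D} {G : D ⥤ C}
    (adj : F ⊣ G) {X : C} {Y : D}
    (e : F.obj (G.obj (F.obj X)) = F.obj (G.obj Y)) (e' : F.obj X = Y) :
    F.map (adj.unit.app X) ≫ eqToHom e ≫ adj.counit.app Y = eqToHom e' := by
  subst e'
  simp

lemma mate0_eq (hsq : (Arrow.leftFunc : Arrow A ⥤ A).mapArrow ⋙ toCocartComma p =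
      toCocartComma p.mapArrow ⋙ commaMapCocart p.mapArrow p Arrow.leftFunc Arrow.leftFunc rfl) :
    mateRR (upAdj p L adj) adj hsq = eqToHom (hL0 p L) := by
  refine NatTrans.ext (funext fun c => ?_)
  have h1 := Functor.congr_hom (hn0 p) ((upAdj p L adj).unit.app c)
  have key : (eFun p ⋙ (Arrow.leftFunc : Arrow (Comma p (𝟭 I)) ⥤ Comma p (𝟭 I))).map
      ((upAdj p L adj).unit.app c) = adj.unit.app (eDom p c) := rfl
  simp only [mateRR, NatTrans.comp_app, Functor.whiskerRight_app, Functor.whiskerLeft_app, eqToHom_app,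
    Functor.comp_map, Functor.id_map]
  rw [h1, key]
  rw [L.map_comp]
  erw [L.map_comp, eqToHom_map, eqToHom_map]
  simp only [Category.assoc, eqToHom_trans_assoc]
  erw [tri_conj adj]
  rotate_left
  rfl
  exact eqToHom_trans _ _

lemma hn1 : commaMapCocart p.mapArrow p Arrow.rightFunc Arrow.rightFunc rfl =
    eFun p ⋙ (Arrow.rightFunc : Arrow (Comma p (𝟭 I)) ⥤ Comma p (𝟭 I)) := by
  have hobj : ∀ c, (commaMapCocart p.mapArrow p Arrow.rightFunc Arrow.rightFunc rfl).obj c =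
      (eFun p ⋙ Arrow.rightFunc).obj c := by
    intro c
    refine comma_obj_ext rfl rfl ?_
    erw [eqToHom_refl, eqToHom_refl, Category.comp_id, Category.id_comp]
    exact Category.id_comp _
  refine CategoryTheory.Functor.ext hobj (fun X Y f => ?_)
  ext
  · erw [Comma.comp_left, Comma.comp_left, Comma.eqToHom_left, Comma.eqToHom_left, eqToHom_refl, eqToHom_refl,
      Category.id_comp, Category.comp_id]
    rfl
  · erw [Comma.comp_right, Comma.comp_right, Comma.eqToHom_right, Comma.eqToHom_right, eqToHom_refl, eqToHom_refl,
      Category.id_comp, Category.comp_id]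
    rfl

lemma hL1' : (eFun p ⋙ (Arrow.rightFunc : Arrow (Comma p (𝟭 I)) ⥤ Comma p (𝟭 I))) ⋙ L =
    liftFun p L ⋙ (Arrow.rightFunc : Arrow A ⥤ A).mapArrow :=
  CategoryTheory.Functor.ext (fun c => rfl) (fun X Y f => by erw [eqToHom_refl, eqToHom_refl, Category.id_comp, Category.comp_id]; rfl)

lemma hL1 : commaMapCocart p.mapArrow p Arrow.rightFunc Arrow.rightFunc rfl ⋙ L =
    liftFun p L ⋙ (Arrow.rightFunc : Arrow A ⥤ A).mapArrow := by
  rw [hn1]; exact hL1' p L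

lemma hsq1 : (Arrow.rightFunc : Arrow A ⥤ A).mapArrow ⋙ toCocartComma p =
    toCocartComma p.mapArrow ⋙ commaMapCocart p.mapArrow p Arrow.rightFunc Arrow.rightFunc rfl := by
  have hobj : ∀ φ : Arrow (Arrow A), ((Arrow.rightFunc : Arrow A ⥤ A).mapArrow ⋙ toCocartComma p).obj φ =
      (toCocartComma p.mapArrow ⋙ commaMapCocart p.mapArrow p Arrow.rightFunc Arrow.rightFunc rfl).obj φ := by
    intro φ
    refine comma_obj_ext rfl rfl ?_
    erw [eqToHom_refl, eqToHom_refl, Category.comp_id, Category.id_comp]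
    exact (Category.id_comp _).symm
  refine CategoryTheory.Functor.ext hobj (fun X Y f => ?_)
  ext
  · erw [Comma.comp_left, Comma.comp_left, Comma.eqToHom_left, Comma.eqToHom_left, eqToHom_refl, eqToHom_refl,
      Category.id_comp, Category.comp_id]
    rfl
  · erw [Comma.comp_right, Comma.comp_right, Comma.eqToHom_right, Comma.eqToHom_right, eqToHom_refl, eqToHom_refl,
      Category.id_comp, Category.comp_id]
    rfl

lemma mate1_eq (hsq : (Arrow.rightFunc : Arrow A ⥤ A).mapArrow ⋙ toCocartComma p =
      toCocartComma p.mapArrow ⋙ commaMapCocart p.mapArrow p Arrow.rightFunc Arrow.rightFunc rfl) :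
    mateRR (upAdj p L adj) adj hsq = eqToHom (hL1 p L) := by
  refine NatTrans.ext (funext fun c => ?_)
  have h1 := Functor.congr_hom (hn1 p) ((upAdj p L adj).unit.app c)
  have key : (eFun p ⋙ (Arrow.rightFunc : Arrow (Comma p (𝟭 I)) ⥤ Comma p (𝟭 I))).map
      ((upAdj p L adj).unit.app c) = adj.unit.app (eCod p c) := rfl
  simp only [mateRR, NatTrans.comp_app, Functor.whiskerRight_app, Functor.whiskerLeft_app, eqToHom_app,
    Functor.comp_map, Functor.id_map]
  rw [h1, key]
  rw [L.map_comp]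
  erw [L.map_comp, eqToHom_map, eqToHom_map]
  simp only [Category.assoc, eqToHom_trans_assoc]
  erw [tri_conj adj]
  rotate_left
  rfl
  exact eqToHom_trans _ _

/-- If `p : A ⥤ I` is a cocartesian fibration then so is the induced
functor `p∗ : Arrow A ⥤ Arrow I`, and the source and target evaluation functors are
cocartesian functors over the corresponding evaluation functors. -/
theorem statement10 {A I : Type u} [Category.{v} A] [Category.{v} I]
    (p : A ⥤ I) (hp : IsCocartesianFibration p) :
    IsCocartesianFibration p.mapArrow ∧
    (∃ h : (Arrow.leftFunc : Arrow A ⥤ A) ⋙ p = p.mapArrow ⋙ (Arrow.leftFunc : Arrow I ⥤ I),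
      IsCocartesianFunctor p.mapArrow p Arrow.leftFunc Arrow.leftFunc h) ∧
    (∃ h : (Arrow.rightFunc : Arrow A ⥤ A) ⋙ p = p.mapArrow ⋙ (Arrow.rightFunc : Arrow I ⥤ I),
      IsCocartesianFunctor p.mapArrow p Arrow.rightFunc Arrow.rightFunc h) := by
  obtain ⟨L, adj, hη⟩ := hp
  refine ⟨⟨liftFun p L, upAdj p L adj, upUnit_isIso p L adj hη⟩,
    ⟨rfl, liftFun p L, upAdj p L adj, L, adj, upUnit_isIso p L adj hη, hη, hsq0 p, ?_⟩,
    ⟨rfl, liftFun p L, upAdj p L adj, L, adj, upUnit_isIso p L adj hη, hη, hsq1 p, ?_⟩⟩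
  · rw [mate0_eq p L adj (hsq0 p)]
    infer_instance
  · rw [mate1_eq p L adj (hsq1 p)]
    infer_instance

end Paper
end

section
/- For any functor F : B ⥤ A, the following are equivalent: (1) F admits a right adjoint; (2) the projection functor ev₁ : Comma F (𝟭 A) ⥤ A, sending a pair (b, g : F.obj b → a) to a, admits a fully faithful right adjoint, i.e. a right adjoint whose adjunction counit is a natural isomorphism. -/
open CategoryTheory

universe v u

namespace Paper

variable {A B : Type u} [Category.{v} A] [Category.{v} B]

/-- The functor sending `b` to `(b, 𝟙 (F.obj b))`. -/
@[simps]
def incl (F : B ⥤ A) : B ⥤ Comma F (𝟭 A) where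
  obj b := ⟨b, F.obj b, 𝟙 _⟩
  map f := ⟨f, F.map f, by simp⟩

/-- `incl F` is left adjoint to the first projection. -/
def inclAdj (F : B ⥤ A) : incl F ⊣ Comma.fst F (𝟭 A) :=
  Adjunction.mkOfHomEquiv
    { homEquiv := fun b X =>
        { toFun := fun m => m.left
          invFun := fun f => ⟨f, F.map f ≫ X.hom, by simp; exact (Category.id_comp _).symm⟩
          left_inv := fun m => by
            ext
            · rfl
            · have := m.w
              exact this.trans (Category.id_comp _)
          right_inv := fun f => rfl }
      homEquiv_naturality_left_symm := by
        intros; ext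
        · rfl
        · exact (congrArg (· ≫ _) (F.map_comp _ _)).trans (Category.assoc _ _ _)
      homEquiv_naturality_right := by intros; rfl }

/-- Given `adj : F ⊣ U`, the right adjoint of the second projection. -/
@[simps]
def rightAdjOfAdj {F : B ⥤ A} {U : A ⥤ B} (adj : F ⊣ U) : A ⥤ Comma F (𝟭 A) where
  obj a := ⟨U.obj a, a, adj.counit.app a⟩
  map f := ⟨U.map f, f, by simp⟩

lemma key {F : B ⥤ A} {U : A ⥤ B} (adj : F ⊣ U) {b : B} {a : A} (g : F.obj b ⟶ a) :
    F.map ((adj.homEquiv b a) g) ≫ adj.counit.app a = g := by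
  have h := (adj.homEquiv b a).symm_apply_apply g
  rwa [Adjunction.homEquiv_counit] at h

def sndAdj {F : B ⥤ A} {U : A ⥤ B} (adj : F ⊣ U) :
    Comma.snd F (𝟭 A) ⊣ rightAdjOfAdj adj :=
  Adjunction.mkOfHomEquiv
    { homEquiv := fun X a =>
        { toFun := fun h =>
            ⟨(adj.homEquiv _ _) (X.hom ≫ h), h, by
              exact key adj (X.hom ≫ h)⟩
          invFun := fun m => m.right
          left_inv := fun h => rfl
          right_inv := fun m => by
            ext
            · apply (adj.homEquiv _ _).symm.injective
              have := m.w
              simp at this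
              simp [Adjunction.homEquiv_counit, this]
              exact this.symm.trans (Adjunction.homEquiv_counit adj _ _ _).symm
            · rfl }
      homEquiv_naturality_left_symm := by intros; rfl
      homEquiv_naturality_right := by
        intros X a a' h g
        ext
        · apply (adj.homEquiv _ _).symm.injective
          exact congrArg (adj.homEquiv _ _).symm ((congrArg (adj.homEquiv _ _)
            (Category.assoc _ _ _).symm).trans (adj.homEquiv_naturality_right _ _))
        · rfl }

/-- A functor `F : B ⥤ A` admits a right adjoint if and only if the
projection `ev₁ : Comma F (𝟭 A) ⥤ A` admits a fully faithful right adjoint. -/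
theorem statement13 {A B : Type u} [Category.{v} A] [Category.{v} B] (F : B ⥤ A) :
    (∃ U : A ⥤ B, Nonempty (F ⊣ U)) ↔
      ∃ (R : A ⥤ Comma F (𝟭 A)) (adj : Comma.snd F (𝟭 A) ⊣ R), IsIso adj.counit := by
  constructor
  · rintro ⟨U, ⟨adj⟩⟩
    refine ⟨rightAdjOfAdj adj, sndAdj adj, ?_⟩
    have : ∀ a, IsIso ((sndAdj adj).counit.app a) := by
      intro a
      have : ((sndAdj adj).counit.app a) = 𝟙 a := by
        simp [sndAdj, Adjunction.mkOfHomEquiv]; rfl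
      rw [this]
      exact IsIso.id a
    exact NatIso.isIso_of_isIso_app _
  · rintro ⟨R, adj, _⟩
    refine ⟨R ⋙ Comma.fst F (𝟭 A), ⟨((inclAdj F).comp adj).ofNatIsoLeft ?_⟩⟩
    exact NatIso.ofComponents (fun b => Iso.refl _) (by intros; simp; exact (Category.comp_id _).trans (Category.id_comp _).symm)

end Paper
end

section
/- Let p : X ⥤ B be a cocartesian fibration, and let f : S ⟶ T and g : T ⟶ R be natural transformations between functors A ⥤ X such that f is a p-cocartesian lift. Then g is a p-cocartesian lift if and only if the composite g ∘ f : S ⟶ R is a p-cocartesian lift. In particular (taking A the terminal category), for composable morphisms f and g of X with f p-cocartesian, g is p-cocartesian if and only if g ∘ f is p-cocartesian. -/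
open CategoryTheory

universe v v' u u'

namespace Paper

/-- The functor `A ⥤ Arrow X` corresponding to a natural transformation between two
functors `A ⥤ X`. -/
def natTransToArrow {A X : Type*} [Category A] [Category X] {S T : A ⥤ X} (φ : S ⟶ T) :
    A ⥤ Arrow X where
  obj a := Arrow.mk (φ.app a)
  map {a a'} f := Arrow.homMk (u := S.map f) (v := T.map f) (φ.naturality f)

/-- A natural transformation `φ` between functors `A ⥤ X` is a `p`-cocartesian lift if the
corresponding functor `A ⥤ Arrow X` is, up to natural isomorphism, in the essential image
of the cocartesian-lift left adjoint of the comparison functor of `p`. -/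
def IsCocartesianLift {X B A : Type*} [Category X] [Category B] [Category A]
    (p : X ⥤ B) {S T : A ⥤ X} (φ : S ⟶ T) : Prop :=
  ∃ (L : Comma p (𝟭 B) ⥤ Arrow X) (adj : L ⊣ toCocartComma p) (_ : IsIso adj.unit)
    (K : A ⥤ Comma p (𝟭 B)), Nonempty (K ⋙ L ≅ natTransToArrow φ)

/-- A morphism `f` of `X` is a `p`-cocartesian lift if the corresponding object of
`Arrow X` is, up to isomorphism, in the essential image of the cocartesian-lift left
adjoint of the comparison functor of `p`. -/
def IsCocartesianMorphism {X B : Type*} [Category X] [Category B] (p : X ⥤ B)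
    {x x' : X} (f : x ⟶ x') : Prop :=
  ∃ (L : Comma p (𝟭 B) ⥤ Arrow X) (adj : L ⊣ toCocartComma p) (_ : IsIso adj.unit)
    (c : Comma p (𝟭 B)), Nonempty (L.obj c ≅ Arrow.mk f)

variable {X B : Type u} [Category.{v} X] [Category.{v} B] (p : X ⥤ B)

def HasLifts (a : Arrow X) : Prop :=
  ∀ b : Arrow X, Function.Bijective (fun (u : a ⟶ b) => (toCocartComma p).map u)

def LiftProp {x y : X} (f : x ⟶ y) : Prop :=
  ∀ ⦃z : X⦄ (h : x ⟶ z) (w : p.obj y ⟶ p.obj z), p.map h = p.map f ≫ w →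
    ∃! v : y ⟶ z, f ≫ v = h ∧ p.map v = w

lemma hasLifts_iff_liftProp {x y : X} (f : x ⟶ y) :
    HasLifts p (Arrow.mk f) ↔ LiftProp p f := by
  constructor
  · intro H z h w hw
    let c : (toCocartComma p).obj (Arrow.mk f) ⟶ (toCocartComma p).obj (Arrow.mk (𝟙 z)) :=
      { left := h
        right := w
        w := by dsimp [toCocartComma]; simp [← hw] }
    obtain ⟨u, hu⟩ := (H (Arrow.mk (𝟙 z))).2 c
    have h1 : u.left = h := by have e := congrArg CommaMorphism.left hu; exact e
    have h2 : p.map u.right = w := by have e := congrArg CommaMorphism.right hu; exact e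
    have h3 : f ≫ u.right = h := by
      have := u.w
      dsimp at this
      rw [Category.comp_id] at this
      rw [← this, h1]
    refine ⟨u.right, ⟨h3, h2⟩, ?_⟩
    intro v' hv'
    let u' : Arrow.mk f ⟶ Arrow.mk (𝟙 z) :=
      { left := h
        right := v'
        w := by dsimp; rw [Category.comp_id, hv'.1] }
    have : u' = u := (H (Arrow.mk (𝟙 z))).1 (by
      rw [hu]
      apply CommaMorphism.ext
      · rfl
      · exact hv'.2)
    exact congrArg CommaMorphism.right this
  · intro Lp b
    constructor
    · intro u u' huu
      replace huu : (toCocartComma p).map u = (toCocartComma p).map u' := huu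
      have h1 : u.left = u'.left := by
        have h := congrArg CommaMorphism.left huu; exact h
      have h2 : p.map u.right = p.map u'.right := by
        have h := congrArg CommaMorphism.right huu; exact h
      have hw : p.map (u.left ≫ b.hom) = p.map f ≫ p.map u.right := by
        have := u.w; dsimp at this
        rw [this, p.map_comp]
      obtain ⟨v, hv, huniq⟩ := Lp (u.left ≫ b.hom) (p.map u.right) hw
      have e1 : u.right = v := huniq u.right ⟨by have := u.w; dsimp at this; rw [← this], rfl⟩
      have e2 : u'.right = v := huniq u'.right
        ⟨by have := u'.w; dsimp at this; rw [← this, h1], h2.symm⟩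
      apply CommaMorphism.ext
      · exact h1
      · exact e1.trans e2.symm
    · intro c
      have hw : p.map (c.left ≫ b.hom) = p.map f ≫ c.right := by
        refine (p.map_comp _ _).trans ?_
        have := c.w; dsimp [toCocartComma] at this
        exact this
      obtain ⟨v, ⟨hv1, hv2⟩, _⟩ := Lp (c.left ≫ b.hom) c.right hw
      refine ⟨{ left := c.left, right := v, w := by dsimp; rw [hv1]; rfl }, ?_⟩
      apply CommaMorphism.ext
      · rfl
      · exact hv2

lemma liftProp_comp_iff {x y z : X} {f : x ⟶ y} (hf : LiftProp p f) (g : y ⟶ z) :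
    LiftProp p g ↔ LiftProp p (f ≫ g) := by
  constructor
  · intro hg c h w hw
    obtain ⟨v₁, ⟨hva, hvb⟩, huniq₁⟩ := hf h (p.map g ≫ w)
      (by rw [hw, p.map_comp, Category.assoc])
    obtain ⟨v, ⟨hv1, hv2⟩, huniq⟩ := hg v₁ w (by rw [hvb])
    refine ⟨v, ⟨by rw [Category.assoc, hv1, hva], hv2⟩, ?_⟩
    intro v' hv'
    have : g ≫ v' = v₁ := huniq₁ (g ≫ v')
      ⟨by rw [← Category.assoc]; exact hv'.1, by rw [p.map_comp, hv'.2]⟩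
    exact huniq v' ⟨this, hv'.2⟩
  · intro hfg c h w hw
    obtain ⟨v, ⟨hv1, hv2⟩, huniq⟩ := hfg (f ≫ h) w
      (by rw [p.map_comp, hw, p.map_comp, Category.assoc])
    have key : g ≫ v = h := by
      obtain ⟨v₁, _, huniq₁⟩ := hf (f ≫ h) (p.map h) (by rw [p.map_comp])
      have e1 : g ≫ v = v₁ := huniq₁ _
        ⟨by rw [← Category.assoc]; exact hv1, by rw [p.map_comp, hv2, ← hw]⟩
      have e2 : h = v₁ := huniq₁ _ ⟨rfl, rfl⟩
      rw [e1, ← e2]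
    refine ⟨v, ⟨key, hv2⟩, ?_⟩
    intro v' hv'
    exact huniq v' ⟨by rw [Category.assoc, hv'.1], hv'.2⟩

lemma counit_iso_iff {L : Comma p (𝟭 B) ⥤ Arrow X} (adj : L ⊣ toCocartComma p)
    (a : Arrow X) : IsIso (adj.counit.app a) ↔ HasLifts p a := by
  rw [isIso_iff_coyoneda_map_bijective]
  refine forall_congr' fun b => ?_
  have key : ∀ (u : a ⟶ b),
      (toCocartComma p).map u = adj.homEquiv _ b (adj.counit.app a ≫ u) := by
    intro u
    rw [Adjunction.homEquiv_unit, Functor.map_comp, ← Category.assoc,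
      adj.right_triangle_components, Category.id_comp]
  have hfe : (fun (u : a ⟶ b) => (toCocartComma p).map u) =
      (adj.homEquiv _ b) ∘ (fun u => adj.counit.app a ≫ u) := funext key
  rw [hfe, Equiv.comp_bijective]

lemma counit_iso_of_iso {C D : Type*} [Category C] [Category D] {L : C ⥤ D} {G : D ⥤ C}
    (adj : L ⊣ G) {a b : D} (e : a ≅ b) (h : IsIso (adj.counit.app a)) :
    IsIso (adj.counit.app b) := by
  have : adj.counit.app b = (G ⋙ L).map e.inv ≫ adj.counit.app a ≫ e.hom := by
    rw [adj.counit.naturality_assoc e.inv]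
    simp
  rw [this]
  infer_instance

lemma counit_iso_obj {C D : Type*} [Category C] [Category D] {L : C ⥤ D} {G : D ⥤ C}
    (adj : L ⊣ G) (hu : IsIso adj.unit) (c : C) : IsIso (adj.counit.app (L.obj c)) := by
  have : IsIso (adj.unit.app c) := NatIso.isIso_app_of_isIso adj.unit c
  have h : IsIso (L.map (adj.unit.app c) ≫ adj.counit.app (L.obj c)) := by
    rw [adj.left_triangle_components c]; exact IsIso.id _
  exact IsIso.of_isIso_comp_left (L.map (adj.unit.app c)) (adj.counit.app (L.obj c))

lemma isCocartesianMorphism_iff' (hp : IsCocartesianFibration p) {x y : X} (f : x ⟶ y) :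
    IsCocartesianMorphism p f ↔ LiftProp p f := by
  rw [← hasLifts_iff_liftProp]
  constructor
  · rintro ⟨L, adj, hu, c, ⟨e⟩⟩
    rw [← counit_iso_iff p adj]
    exact counit_iso_of_iso adj e (counit_iso_obj adj hu c)
  · intro H
    obtain ⟨L, adj, hu⟩ := hp
    have : IsIso (adj.counit.app (Arrow.mk f)) := (counit_iso_iff p adj _).2 H
    exact ⟨L, adj, hu, (toCocartComma p).obj (Arrow.mk f),
      ⟨asIso (adj.counit.app (Arrow.mk f))⟩⟩

lemma isCocartesianLift_iff' (hp : IsCocartesianFibration p) {A : Type u'} [Category.{v'} A]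
    {S T : A ⥤ X} (φ : S ⟶ T) :
    IsCocartesianLift p φ ↔ ∀ a, LiftProp p (φ.app a) := by
  constructor
  · rintro ⟨L, adj, hu, K, ⟨e⟩⟩ a
    rw [← hasLifts_iff_liftProp, ← counit_iso_iff p adj]
    exact counit_iso_of_iso adj (e.app a) (counit_iso_obj adj hu (K.obj a))
  · intro H
    obtain ⟨L, adj, hu⟩ := hp
    refine ⟨L, adj, hu, natTransToArrow φ ⋙ toCocartComma p, ⟨?_⟩⟩
    let τ : (natTransToArrow φ ⋙ toCocartComma p) ⋙ L ⟶ natTransToArrow φ :=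
      { app := fun a => adj.counit.app ((natTransToArrow φ).obj a)
        naturality := fun a b m => adj.counit.naturality ((natTransToArrow φ).map m) }
    have hτ : ∀ a, IsIso (τ.app a) := fun a =>
      (counit_iso_iff p adj (Arrow.mk (φ.app a))).2 ((hasLifts_iff_liftProp p _).2 (H a))
    have : IsIso τ := NatIso.isIso_of_isIso_app τ
    exact asIso τ

/-- Let `p : X ⥤ B` be a cocartesian fibration. Given natural
transformations `f : S ⟶ T` and `g : T ⟶ R` between functors `A ⥤ X` with `f` a
`p`-cocartesian lift, `g` is a `p`-cocartesian lift iff `f ≫ g` is. In particular, for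
composable morphisms of `X` with the first one cocartesian, the second is cocartesian iff
the composite is. -/
theorem statement14 {X B : Type u} [Category.{v} X] [Category.{v} B]
    (p : X ⥤ B) (hp : IsCocartesianFibration p) :
    (∀ {A : Type u'} [Category.{v'} A] {S T R : A ⥤ X} (f : S ⟶ T) (g : T ⟶ R),
      IsCocartesianLift p f → (IsCocartesianLift p g ↔ IsCocartesianLift p (f ≫ g))) ∧
    (∀ {x y z : X} (f : x ⟶ y) (g : y ⟶ z),
      IsCocartesianMorphism p f →
        (IsCocartesianMorphism p g ↔ IsCocartesianMorphism p (f ≫ g))) := by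
  constructor
  · intro A _ S T R f g hf
    rw [isCocartesianLift_iff' p hp, isCocartesianLift_iff' p hp]
    have hf' := (isCocartesianLift_iff' p hp f).1 hf
    exact forall_congr' fun a => liftProp_comp_iff p (hf' a) (g.app a)
  · intro x y z f g hf
    rw [isCocartesianMorphism_iff' p hp, isCocartesianMorphism_iff' p hp]
    exact liftProp_comp_iff p ((isCocartesianMorphism_iff' p hp f).1 hf) g

end Paper
end

section
/- For any functor F : A ⥤ C, the projection functor ev₁ : Comma F (𝟭 C) ⥤ C, sending a pair (a, g : F.obj a → c) to c, is a cocartesian fibration (the free cocartesian fibration on F). Moreover, for any strictly commutative square of functors G ∘ H = K ∘ F, with H : A ⥤ B, F : A ⥤ C, G : B ⥤ D and K : C ⥤ D, the induced functor Comma F (𝟭 C) ⥤ Comma G (𝟭 D), sending (a, g : F.obj a → c) to (H.obj a, K.map g : G.obj (H.obj a) → K.obj c), is a cocartesian functor over K with respect to the two projection cocartesian fibrations ev₁. -/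
open CategoryTheory

universe v u

namespace Paper

section FreeFibration

variable {A C : Type u} [Category.{v} A] [Category.{v} C] (F : A ⥤ C)

def fpush (z : Comma (Comma.snd F (𝟭 C)) (𝟭 C)) : Comma F (𝟭 C) where
  left := z.left.left
  right := z.right
  hom := z.left.hom ≫ z.hom

def flift (z : Comma (Comma.snd F (𝟭 C)) (𝟭 C)) : z.left ⟶ fpush F z where
  left := 𝟙 _
  right := z.hom
  w := by simp [fpush]

def fpushMap {z z' : Comma (Comma.snd F (𝟭 C)) (𝟭 C)} (φ : z ⟶ z') :
    fpush F z ⟶ fpush F z' where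
  left := φ.left.left
  right := φ.right
  w := by
    have h1 : F.map φ.left.left ≫ z'.left.hom = z.left.hom ≫ φ.left.right := by
      simpa using φ.left.w
    have h2 : φ.left.right ≫ z'.hom = z.hom ≫ φ.right := by simpa using φ.w
    show F.map φ.left.left ≫ z'.left.hom ≫ z'.hom = (z.left.hom ≫ z.hom) ≫ φ.right
    rw [← Category.assoc, h1, Category.assoc, h2, Category.assoc]

def freeL : Comma (Comma.snd F (𝟭 C)) (𝟭 C) ⥤ Arrow (Comma F (𝟭 C)) where
  obj z := Arrow.mk (flift F z)
  map {z z'} φ :=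
    { left := φ.left
      right := fpushMap F φ
      w := by
        have h2 : φ.left.right ≫ z'.hom = z.hom ≫ φ.right := by simpa using φ.w
        ext
        · show φ.left.left ≫ 𝟙 _ = 𝟙 _ ≫ (fpushMap F φ).left
          simp [fpushMap]
          exact (Category.id_comp _).symm
        · show φ.left.right ≫ z'.hom = z.hom ≫ (fpushMap F φ).right
          exact h2 }
  map_id z := by
    ext <;> simp [fpushMap] <;> rfl
  map_comp φ ψ := by
    ext <;> simp [fpushMap] <;> rfl

def ffwd {z : Comma (Comma.snd F (𝟭 C)) (𝟭 C)} {f : Arrow (Comma F (𝟭 C))}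
    (ψ : (freeL F).obj z ⟶ f) : z ⟶ (toCocartComma (Comma.snd F (𝟭 C))).obj f where
  left := ψ.left
  right := ψ.right.right
  w := by
    have := congrArg CommaMorphism.right ψ.w
    simp only [Comma.comp_right, Functor.id_map] at this
    show ψ.left.right ≫ f.hom.right = z.hom ≫ ψ.right.right
    exact this

def fbwd {z : Comma (Comma.snd F (𝟭 C)) (𝟭 C)} {f : Arrow (Comma F (𝟭 C))}
    (χ : z ⟶ (toCocartComma (Comma.snd F (𝟭 C))).obj f) : (freeL F).obj z ⟶ f where
  left := χ.left
  right :=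
    { left := χ.left.left ≫ f.hom.left
      right := χ.right
      w := by
        have h1 : F.map χ.left.left ≫ f.left.hom = z.left.hom ≫ χ.left.right := by
          simpa [toCocartComma] using χ.left.w
        have h2 : χ.left.right ≫ f.hom.right = z.hom ≫ χ.right := by
          simpa [toCocartComma] using χ.w
        have h3 : F.map f.hom.left ≫ f.right.hom = f.left.hom ≫ f.hom.right := by
          simpa using f.hom.w
        show F.map (χ.left.left ≫ f.hom.left) ≫ f.right.hom = (z.left.hom ≫ z.hom) ≫ χ.right
        exact (congrArg (· ≫ f.right.hom) (F.map_comp χ.left.left f.hom.left)).trans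
          ((Category.assoc _ _ _).trans ((congrArg (F.map χ.left.left ≫ ·) h3).trans
          (((Category.assoc _ _ _).symm.trans (congrArg (· ≫ f.hom.right) h1)).trans
          ((Category.assoc _ _ _).trans ((congrArg (z.left.hom ≫ ·) h2).trans
          (Category.assoc _ _ _).symm))))) }
  w := by
    have h2 : χ.left.right ≫ f.hom.right = z.hom ≫ χ.right := by
      simpa [toCocartComma] using χ.w
    ext
    · show χ.left.left ≫ f.hom.left = 𝟙 _ ≫ (χ.left.left ≫ f.hom.left)
      simp
    · show χ.left.right ≫ f.hom.right = z.hom ≫ χ.right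
      exact h2

def freeAdj : freeL F ⊣ toCocartComma (Comma.snd F (𝟭 C)) :=
  Adjunction.mkOfHomEquiv
    { homEquiv := fun z f =>
        { toFun := ffwd F
          invFun := fbwd F
          left_inv := fun ψ => by
            have h := congrArg CommaMorphism.left ψ.w
            simp only [Comma.comp_left, Functor.id_map] at h
            ext
            · rfl
            · rfl
            · show ψ.left.left ≫ f.hom.left = ψ.right.left
              exact h.trans (Category.id_comp _)
            · rfl
          right_inv := fun χ => by
            ext <;> rfl }
      homEquiv_naturality_left_symm := by
        intro z z' f g h
        show fbwd F (g ≫ h) = (freeL F).map g ≫ fbwd F h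
        ext
        · rfl
        · rfl
        · show ((g ≫ h).left.left ≫ _) = _
          simp [fbwd, freeL, fpushMap]
          exact Category.assoc _ _ _
        · rfl
      homEquiv_naturality_right := by
        intro z f f' g h
        show ffwd F (g ≫ h) = ffwd F g ≫ (toCocartComma _).map h
        ext
        · rfl
        · rfl
        · rfl }

lemma freeAdj_unit_app (z : Comma (Comma.snd F (𝟭 C)) (𝟭 C)) :
    (freeAdj F).unit.app z = ffwd F (𝟙 _) := rfl

lemma freeAdj_counit_app (f : Arrow (Comma F (𝟭 C))) :
    (freeAdj F).counit.app f = fbwd F (𝟙 _) := rfl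

def funitInv (z : Comma (Comma.snd F (𝟭 C)) (𝟭 C)) :
    (toCocartComma (Comma.snd F (𝟭 C))).obj ((freeL F).obj z) ⟶ z where
  left := 𝟙 z.left
  right := 𝟙 z.right
  w := by
    show 𝟙 _ ≫ z.hom = z.hom ≫ 𝟙 _
    simp

instance freeAdj_unit_app_isIso (z : Comma (Comma.snd F (𝟭 C)) (𝟭 C)) :
    IsIso ((freeAdj F).unit.app z) := by
  rw [freeAdj_unit_app]
  exact ⟨funitInv F z, by ext <;> exact (Category.id_comp _).trans rfl,
    by ext <;> exact (Category.id_comp _).trans rfl⟩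

instance freeAdj_unit_isIso : IsIso (freeAdj F).unit :=
  NatIso.isIso_of_isIso_app _

noncomputable def fcounitInv (f : Arrow (Comma F (𝟭 C))) [IsIso f.hom.left] :
    f ⟶ (freeL F).obj ((toCocartComma (Comma.snd F (𝟭 C))).obj f) where
  left := 𝟙 f.left
  right :=
    { left := (inv f.hom.left : f.right.left ⟶ f.left.left)
      right := 𝟙 f.right.right
      w := by
        have h3 : F.map f.hom.left ≫ f.right.hom = f.left.hom ≫ f.hom.right := by
          simpa using f.hom.w
        show F.map (inv f.hom.left) ≫ (f.left.hom ≫ f.hom.right) = f.right.hom ≫ 𝟙 _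
        rw [← h3, ← F.map_comp_assoc]
        simp }
  w := by
    ext
    · show 𝟙 f.left.left ≫ 𝟙 f.left.left = f.hom.left ≫ inv f.hom.left
      simp
    · show 𝟙 f.left.right ≫ f.hom.right = f.hom.right ≫ 𝟙 _
      simp

instance freeAdj_counit_app_isIso (f : Arrow (Comma F (𝟭 C))) [IsIso f.hom.left] :
    IsIso ((freeAdj F).counit.app f) := by
  rw [freeAdj_counit_app]
  refine ⟨fcounitInv F f, ?_, ?_⟩
  · ext
    · exact (Category.id_comp _).trans rfl
    · exact (Category.id_comp _).trans rfl
    · show (𝟙 _ ≫ f.hom.left) ≫ inv f.hom.left = 𝟙 _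
      simp
    · exact (Category.id_comp _).trans rfl
  · ext
    · exact (Category.id_comp _).trans rfl
    · exact (Category.id_comp _).trans rfl
    · show inv f.hom.left ≫ (𝟙 _ ≫ f.hom.left) = 𝟙 _
      simp
    · exact (Category.comp_id _).trans rfl

end FreeFibration

section Square

variable {A B C D : Type u}
    [Category.{v} A] [Category.{v} B] [Category.{v} C] [Category.{v} D]
    (F : A ⥤ C) (H : A ⥤ B) (G : B ⥤ D) (K : C ⥤ D) (hsq : H ⋙ G = F ⋙ K)

lemma bot_sq : commaMapCocart F G H K hsq ⋙ Comma.snd G (𝟭 D) = Comma.snd F (𝟭 C) ⋙ K := rfl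

lemma comma_hom_congr {T₁ T₂ T₃ : Type*} [Category T₁] [Category T₂] [Category T₃]
    {L : T₁ ⥤ T₃} {R : T₂ ⥤ T₃} {a : T₁} {b : T₂} {h₁ h₂ : L.obj a ⟶ R.obj b} (e : h₁ = h₂) :
    (⟨a, b, h₁⟩ : Comma L R) = ⟨a, b, h₂⟩ := by rw [e]

lemma cc_eqToHom_left_left {X Y : Comma (Comma.snd G (𝟭 D)) (𝟭 D)} (e : X = Y) :
    (eqToHom e).left.left = eqToHom (congrArg (fun x => x.left.left) e) := by
  subst e
  rfl

lemma cc_eqToHom_left_right {X Y : Comma (Comma.snd G (𝟭 D)) (𝟭 D)} (e : X = Y) :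
    (eqToHom e).left.right = eqToHom (congrArg (fun x => x.left.right) e) := by
  subst e
  rfl

lemma cc_eqToHom_right {X Y : Comma (Comma.snd G (𝟭 D)) (𝟭 D)} (e : X = Y) :
    (eqToHom e).right = eqToHom (congrArg (fun x => x.right) e) := by
  subst e
  rfl

lemma main_sq :
    (commaMapCocart F G H K hsq).mapArrow ⋙ toCocartComma (Comma.snd G (𝟭 D)) =
      toCocartComma (Comma.snd F (𝟭 C)) ⋙
        commaMapCocart (Comma.snd F (𝟭 C)) (Comma.snd G (𝟭 D))
          (commaMapCocart F G H K hsq) K (bot_sq F H G K hsq) := by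
  refine CategoryTheory.Functor.ext (fun f => ?_) (fun f g φ => ?_)
  · exact comma_hom_congr (Category.id_comp _).symm
  · ext
    · simp only [Comma.comp_left, Comma.comp_right]
      erw [cc_eqToHom_left_left, cc_eqToHom_left_left]
      erw [eqToHom_refl, eqToHom_refl, Category.id_comp, Category.comp_id]
      rfl
    · simp only [Comma.comp_left, Comma.comp_right]
      erw [cc_eqToHom_left_right, cc_eqToHom_left_right]
      erw [eqToHom_refl, eqToHom_refl, Category.id_comp, Category.comp_id]
      rfl
    · simp only [Comma.comp_left, Comma.comp_right]
      erw [cc_eqToHom_right, cc_eqToHom_right]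
      erw [eqToHom_refl, eqToHom_refl, Category.id_comp, Category.comp_id]
      rfl

end Square

/-- For any functor `F : A ⥤ C`, the projection
`ev₁ : Comma F (𝟭 C) ⥤ C` is a cocartesian fibration, and for any strictly commutative
square `H ⋙ G = F ⋙ K` the induced functor `Comma F (𝟭 C) ⥤ Comma G (𝟭 D)`,
`(a, g) ↦ (H.obj a, K.map g)`, is a cocartesian functor over `K`. -/
theorem statement16 {A B C D : Type u}
    [Category.{v} A] [Category.{v} B] [Category.{v} C] [Category.{v} D]
    (F : A ⥤ C) (H : A ⥤ B) (G : B ⥤ D) (K : C ⥤ D) (hsq : H ⋙ G = F ⋙ K) :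
    IsCocartesianFibration (Comma.snd F (𝟭 C)) ∧
    ∃ h : commaMapCocart F G H K hsq ⋙ Comma.snd G (𝟭 D) = Comma.snd F (𝟭 C) ⋙ K,
      IsCocartesianFunctor (Comma.snd F (𝟭 C)) (Comma.snd G (𝟭 D))
        (commaMapCocart F G H K hsq) K h := by
  refine ⟨⟨freeL F, freeAdj F, freeAdj_unit_isIso F⟩, bot_sq F H G K hsq, ?_⟩
  refine ⟨freeL F, freeAdj F, freeL G, freeAdj G, freeAdj_unit_isIso F, freeAdj_unit_isIso G,
    main_sq F H G K hsq, ?_⟩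
  rw [NatTrans.isIso_iff_isIso_app]
  intro z
  simp only [mateRR, NatTrans.comp_app, Functor.whiskerRight_app, Functor.whiskerLeft_app, eqToHom_app]
  haveI : IsIso (((freeL F ⋙ (commaMapCocart F G H K hsq).mapArrow).obj z).hom.left) := by
    show IsIso (H.map (𝟙 z.left.left))
    infer_instance
  haveI := freeAdj_counit_app_isIso G ((freeL F ⋙ (commaMapCocart F G H K hsq).mapArrow).obj z)
  infer_instance

end Paper
end

section
/- Let a strictly commutative square of functors q ∘ U = V ∘ p be given, with p : A ⥤ B a cocartesian fibration, U : A ⥤ C, V : B ⥤ D and q : C ⥤ D, and suppose U and V admit left adjoints F and G respectively, such that the square is adjointable: the mate natural transformation G ∘ q ⟶ p ∘ F, built from the unit of F ⊣ U and the counit of G ⊣ V via the square identification, is a natural isomorphism. Then the functor Comma (𝟭 C) U ⥤ Comma q V, sending an object (c, f : c → U.obj a) to (c, q.map f : q.obj c → V.obj (p.obj a)) (using q ∘ U = V ∘ p) and acting in the evident way on morphisms, admits a fully faithful left adjoint (a left adjoint whose unit is a natural isomorphism). -/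
open CategoryTheory

universe v u

namespace Paper

variable {A B C D : Type u} [Category.{v} A] [Category.{v} B] [Category.{v} C] [Category.{v} D]

/-- The functor `Comma (𝟭 C) U ⥤ Comma q V` induced by a strictly commutative square
`U ⋙ q = p ⋙ V`, sending `(c, f : c ⟶ U.obj a)` to `(c, q.map f : q.obj c ⟶ V.obj (p.obj a))`. -/
def commaSlice (p : A ⥤ B) (U : A ⥤ C) (V : B ⥤ D) (q : C ⥤ D)
    (comm : U ⋙ q = p ⋙ V) : Comma (𝟭 C) U ⥤ Comma q V where
  obj c :=
    { left := c.left
      right := p.obj c.right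
      hom := q.map c.hom ≫ eqToHom (Functor.congr_obj comm c.right) }
  map {c c'} φ :=
    { left := φ.left
      right := p.map φ.right
      w := by
        have hh := Functor.congr_hom comm φ.right
        have hw := φ.w
        simp only [Functor.comp_map] at hh
        simp only [Functor.id_map] at hw ⊢
        have hh' : eqToHom (Functor.congr_obj comm c.right) ≫ V.map (p.map φ.right)
            = q.map (U.map φ.right) ≫ eqToHom (Functor.congr_obj comm c'.right) := by
          rw [hh]
          simp
        rw [Category.assoc, hh', ← Category.assoc, ← q.map_comp, hw, q.map_comp,
          Category.assoc] }

section Construction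

/-- A comma morphism with invertible components is invertible. -/
lemma comma_isIso_s19 {C₁ C₂ C₃ : Type*} [Category C₁] [Category C₂] [Category C₃]
    {L : C₁ ⥤ C₃} {R : C₂ ⥤ C₃} {M N : Comma L R} (φ : M ⟶ N)
    [IsIso φ.left] [IsIso φ.right] : IsIso φ := by
  refine ⟨⟨⟨inv φ.left, inv φ.right, ?_⟩, ?_, ?_⟩⟩
  · rw [Functor.map_inv, Functor.map_inv, IsIso.inv_comp_eq, ← Category.assoc, φ.w,
      Category.assoc, IsIso.hom_inv_id, Category.comp_id]
  · apply CommaMorphism.ext <;> simp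
  · apply CommaMorphism.ext <;> simp

variable {p : A ⥤ B} {U : A ⥤ C} {V : B ⥤ D} {q : C ⥤ D}
  (comm : U ⋙ q = p ⋙ V) {F : C ⥤ A} {G : D ⥤ B} (adjF : F ⊣ U) (adjG : G ⊣ V)

lemma mateRR_app (c : C) :
    (mateRR adjF adjG comm.symm).app c
      = G.map (q.map (adjF.unit.app c))
        ≫ eqToHom (by
            have := Functor.congr_obj comm (F.obj c)
            simp only [Functor.comp_obj] at this ⊢
            rw [this])
        ≫ adjG.counit.app (p.obj (F.obj c)) := by
  simp [mateRR, eqToHom_app]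

/-- Key identity: the `G`-transpose of `q.map f ≫ eqToHom` equals the mate followed by `p`
applied to the `F`-transpose of `f`. -/
lemma key_identity {c : C} {a : A} (f : c ⟶ U.obj a) :
    (adjG.homEquiv (q.obj c) (p.obj a)).symm (q.map f ≫ eqToHom (Functor.congr_obj comm a))
      = (mateRR adjF adjG comm.symm).app c ≫ p.map ((adjF.homEquiv c a).symm f) := by
  have hf := ((adjF.homEquiv c a).apply_symm_apply f).symm
  rw [Adjunction.homEquiv_unit] at hf
  set e := (adjF.homEquiv c a).symm f with he
  have hq : q.map (U.map e) ≫ eqToHom (Functor.congr_obj comm a)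
      = eqToHom (Functor.congr_obj comm (F.obj c)) ≫ V.map (p.map e) := by
    have := Functor.congr_hom comm e
    simp only [Functor.comp_map] at this
    rw [this]; simp
  rw [mateRR_app comm adjF adjG]
  conv_lhs => rw [hf]
  rw [Adjunction.homEquiv_counit]
  simp only [q.map_comp, G.map_comp, Category.assoc, hq]
  simp only [G.map_comp, Category.assoc, eqToHom_map]
  congr 1
  congr 1
  simpa using adjG.counit.naturality (p.map e)

variable [IsIso (mateRR adjF adjG comm.symm)]

/-- The transpose functor `Comma q V ⥤ Comma p (𝟭 B)` built from the adjunctions and the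
(invertible) mate. -/
noncomputable def Tfun : Comma q V ⥤ Comma p (𝟭 B) where
  obj X :=
    { left := F.obj X.left
      right := X.right
      hom := inv ((mateRR adjF adjG comm.symm).app X.left)
        ≫ (adjG.homEquiv (q.obj X.left) X.right).symm X.hom }
  map {X Y} φ :=
    { left := F.map φ.left
      right := φ.right
      w := by
        have h1 : G.map (q.map φ.left) ≫ (adjG.homEquiv (q.obj Y.left) Y.right).symm Y.hom
            = (adjG.homEquiv (q.obj X.left) X.right).symm X.hom ≫ φ.right := by
          rw [← Adjunction.homEquiv_naturality_left_symm,
            ← Adjunction.homEquiv_naturality_right_symm, φ.w]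
        have h2 : G.map (q.map φ.left) ≫ (mateRR adjF adjG comm.symm).app Y.left
            = (mateRR adjF adjG comm.symm).app X.left ≫ p.map (F.map φ.left) := by
          simpa using (mateRR adjF adjG comm.symm).naturality φ.left
        have h3 : p.map (F.map φ.left) ≫ inv ((mateRR adjF adjG comm.symm).app Y.left)
            = inv ((mateRR adjF adjG comm.symm).app X.left) ≫ G.map (q.map φ.left) := by
          rw [IsIso.comp_inv_eq, Category.assoc, h2, IsIso.inv_hom_id_assoc]
        simp only [Functor.id_map]
        rw [← Category.assoc, h3, Category.assoc, h1, ← Category.assoc, Category.assoc]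
      }
  map_id X := by
    apply CommaMorphism.ext <;> simp
  map_comp φ ψ := by
    apply CommaMorphism.ext <;> simp

variable (L₀ : Comma p (𝟭 B) ⥤ Arrow A) (adj₀ : L₀ ⊣ toCocartComma p)

/-- The left adjoint `Comma q V ⥤ Comma (𝟭 C) U`. -/
noncomputable def Lfun : Comma q V ⥤ Comma (𝟭 C) U where
  obj X :=
    { left := X.left
      right := (L₀.obj ((Tfun comm adjF adjG).obj X)).right
      hom := (adjF.homEquiv _ _)
        ((adj₀.unit.app ((Tfun comm adjF adjG).obj X)).left
          ≫ (L₀.obj ((Tfun comm adjF adjG).obj X)).hom) }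
  map {X Y} φ :=
    { left := φ.left
      right := (L₀.map ((Tfun comm adjF adjG).map φ)).right
      w := by
        simp only [Functor.id_map]
        rw [← Adjunction.homEquiv_naturality_left, ← Adjunction.homEquiv_naturality_right]
        congr 1
        have hl := congrArg CommaMorphism.left
          (adj₀.unit.naturality ((Tfun comm adjF adjG).map φ))
        simp only [Functor.id_map, Functor.comp_map, Comma.comp_left] at hl
        have hw := Arrow.w (L₀.map ((Tfun comm adjF adjG).map φ))
        have : F.map φ.left = ((Tfun comm adjF adjG).map φ).left := rfl
        erw [this, ← Category.assoc, hl]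
        have htc : ((toCocartComma p).map (L₀.map ((Tfun comm adjF adjG).map φ))).left
            = (L₀.map ((Tfun comm adjF adjG).map φ)).left := rfl
        erw [htc, Category.assoc, hw, Category.assoc]; rfl }
  map_id X := by
    apply CommaMorphism.ext
    · rfl
    · simp
  map_comp φ ψ := by
    apply CommaMorphism.ext
    · rfl
    · simp

lemma unit_w (X : Comma q V) :
    p.map ((adj₀.unit.app ((Tfun comm adjF adjG).obj X)).left)
      ≫ p.map ((L₀.obj ((Tfun comm adjF adjG).obj X)).hom)
      = ((Tfun comm adjF adjG).obj X).hom
        ≫ (adj₀.unit.app ((Tfun comm adjF adjG).obj X)).right := by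
  have hw := (adj₀.unit.app ((Tfun comm adjF adjG).obj X)).w
  simpa [toCocartComma] using hw

lemma psi_w {X : Comma q V} {Z : Comma (𝟭 C) U}
    (ψ : (Lfun comm adjF adjG L₀ adj₀).obj X ⟶ Z) :
    F.map ψ.left ≫ (adjF.homEquiv Z.left Z.right).symm Z.hom
      = (adj₀.unit.app ((Tfun comm adjF adjG).obj X)).left
        ≫ (L₀.obj ((Tfun comm adjF adjG).obj X)).hom ≫ ψ.right := by
  have hw : ψ.left ≫ Z.hom
      = (adjF.homEquiv _ _)
          ((adj₀.unit.app ((Tfun comm adjF adjG).obj X)).left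
            ≫ (L₀.obj ((Tfun comm adjF adjG).obj X)).hom) ≫ U.map ψ.right := ψ.w
  have h := congrArg (adjF.homEquiv X.left Z.right).symm hw
  erw [Adjunction.homEquiv_naturality_left_symm,
    Adjunction.homEquiv_naturality_right_symm, Equiv.symm_apply_apply] at h
  erw [h, Category.assoc]; rfl

lemma chi_w {X : Comma q V} {Z : Comma (𝟭 C) U}
    (χ : X ⟶ (commaSlice p U V q comm).obj Z) :
    p.map (F.map χ.left) ≫ p.map ((adjF.homEquiv Z.left Z.right).symm Z.hom)
      = ((Tfun comm adjF adjG).obj X).hom ≫ χ.right := by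
  have hw : q.map χ.left ≫ (q.map Z.hom ≫ eqToHom (Functor.congr_obj comm Z.right))
      = X.hom ≫ V.map χ.right := χ.w
  have h := congrArg (adjG.homEquiv (q.obj X.left) (p.obj Z.right)).symm hw
  erw [Adjunction.homEquiv_naturality_left_symm,
    Adjunction.homEquiv_naturality_right_symm,
    key_identity comm adjF adjG] at h
  dsimp only [commaSlice] at h
  have hnat : G.map (q.map χ.left) ≫ (mateRR adjF adjG comm.symm).app Z.left
      = (mateRR adjF adjG comm.symm).app X.left ≫ p.map (F.map χ.left) := by
    exact (mateRR adjF adjG comm.symm).naturality χ.left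
  have h2 : (mateRR adjF adjG comm.symm).app X.left ≫ p.map (F.map χ.left)
      ≫ p.map ((adjF.homEquiv Z.left Z.right).symm Z.hom)
      = (adjG.homEquiv (q.obj X.left) X.right).symm X.hom ≫ χ.right := by
    erw [← Category.assoc, ← hnat, Category.assoc, h]; rfl
  show _ = (inv ((mateRR adjF adjG comm.symm).app X.left)
      ≫ (adjG.homEquiv (q.obj X.left) X.right).symm X.hom) ≫ χ.right
  erw [Category.assoc, ← h2, IsIso.inv_hom_id_assoc]

lemma toFun_w {X : Comma q V} {Z : Comma (𝟭 C) U}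
    (ψ : (Lfun comm adjF adjG L₀ adj₀).obj X ⟶ Z) :
    q.map ψ.left ≫ (q.map Z.hom ≫ eqToHom (Functor.congr_obj comm Z.right))
      = X.hom ≫ V.map ((adj₀.unit.app ((Tfun comm adjF adjG).obj X)).right
          ≫ p.map ψ.right) := by
  apply (adjG.homEquiv (q.obj X.left) (p.obj Z.right)).symm.injective
  erw [Adjunction.homEquiv_naturality_left_symm,
    Adjunction.homEquiv_naturality_right_symm,
    key_identity comm adjF adjG]
  have hnat : G.map (q.map ψ.left) ≫ (mateRR adjF adjG comm.symm).app Z.left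
      = (mateRR adjF adjG comm.symm).app X.left ≫ p.map (F.map ψ.left) := by
    exact (mateRR adjF adjG comm.symm).naturality ψ.left
  have hpsi := psi_w comm adjF adjG L₀ adj₀ ψ
  erw [← Category.assoc, hnat, Category.assoc, ← p.map_comp, hpsi]
  erw [p.map_comp, p.map_comp,
    ← Category.assoc (p.map ((adj₀.unit.app ((Tfun comm adjF adjG).obj X)).left)),
    unit_w comm adjF adjG L₀ adj₀ X]
  dsimp only [Tfun]
  simp
  erw [← Category.assoc, IsIso.hom_inv_id_assoc]
  exact Category.assoc _ _ _

variable [IsIso adj₀.unit]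

/-- The inner comma morphism used to transpose `χ` along `adj₀`. -/
noncomputable def innerHom {X : Comma q V} {Z : Comma (𝟭 C) U}
    (χ : X ⟶ (commaSlice p U V q comm).obj Z) :
    (Tfun comm adjF adjG).obj X
      ⟶ (toCocartComma p).obj (Arrow.mk ((adjF.homEquiv Z.left Z.right).symm Z.hom)) where
  left := F.map χ.left
  right := χ.right
  w := by
    have := chi_w comm adjF adjG χ
    exact this

lemma left_inv_aux {X : Comma q V} {Z : Comma (𝟭 C) U}
    (ψ : (Lfun comm adjF adjG L₀ adj₀).obj X ⟶ Z)
    (χ : X ⟶ (commaSlice p U V q comm).obj Z)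
    (hl : χ.left = ψ.left)
    (hr : χ.right = (adj₀.unit.app ((Tfun comm adjF adjG).obj X)).right ≫ p.map ψ.right) :
    ((adj₀.homEquiv ((Tfun comm adjF adjG).obj X)
        (Arrow.mk ((adjF.homEquiv Z.left Z.right).symm Z.hom))).symm
        (innerHom comm adjF adjG χ)).right = ψ.right := by
  haveI : IsIso ((adj₀.unit.app ((Tfun comm adjF adjG).obj X)).left) :=
    (inferInstance :
      IsIso ((Comma.fst p (𝟭 B)).map (adj₀.unit.app ((Tfun comm adjF adjG).obj X))))
  have wτ : (𝟭 A).map (inv ((adj₀.unit.app ((Tfun comm adjF adjG).obj X)).left)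
        ≫ F.map ψ.left)
        ≫ (Arrow.mk ((adjF.homEquiv Z.left Z.right).symm Z.hom)).hom
      = (L₀.obj ((Tfun comm adjF adjG).obj X)).hom ≫ (𝟭 A).map ψ.right := by
    simp only [Functor.id_map, Arrow.mk_hom]
    erw [Category.assoc, psi_w comm adjF adjG L₀ adj₀ ψ, IsIso.inv_hom_id_assoc]
    rfl
  have key : innerHom comm adjF adjG χ
      = (adj₀.homEquiv ((Tfun comm adjF adjG).obj X)
          (Arrow.mk ((adjF.homEquiv Z.left Z.right).symm Z.hom)))
          ⟨(inv ((adj₀.unit.app ((Tfun comm adjF adjG).obj X)).left) ≫ F.map ψ.left :),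
            ψ.right, wτ⟩ := by
    erw [Adjunction.homEquiv_unit]
    apply CommaMorphism.ext
    · show F.map χ.left = _
      rw [hl]
      simp [toCocartComma, Comma.comp_left]
      exact (IsIso.hom_inv_id_assoc (adj₀.unit.app ((Tfun comm adjF adjG).obj X)).left _).symm
    · show χ.right = _
      rw [hr]
      simp [toCocartComma, Comma.comp_right]
      rfl
  erw [key, Equiv.symm_apply_apply]

set_option maxHeartbeats 1000000 in
/-- The core hom-equivalence for the adjunction `Lfun ⊣ commaSlice`. -/
noncomputable def core :
    Adjunction.CoreHomEquiv (Lfun comm adjF adjG L₀ adj₀) (commaSlice p U V q comm) where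
  homEquiv X Z :=
    { toFun := fun ψ =>
        { left := ψ.left
          right := (adj₀.unit.app ((Tfun comm adjF adjG).obj X)).right ≫ p.map ψ.right
          w := toFun_w comm adjF adjG L₀ adj₀ ψ }
      invFun := fun χ =>
        { left := χ.left
          right := ((adj₀.homEquiv ((Tfun comm adjF adjG).obj X)
              (Arrow.mk ((adjF.homEquiv Z.left Z.right).symm Z.hom))).symm
              (innerHom comm adjF adjG χ)).right
          w := by
            have hφ := (adj₀.homEquiv ((Tfun comm adjF adjG).obj X)
              (Arrow.mk ((adjF.homEquiv Z.left Z.right).symm Z.hom))).apply_symm_apply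
              (innerHom comm adjF adjG χ)
            rw [Adjunction.homEquiv_unit] at hφ
            have hll := congrArg CommaMorphism.left hφ
            simp only [Comma.comp_left, innerHom, toCocartComma] at hll
            dsimp only [Lfun, commaSlice]
            simp only [Functor.id_map, Functor.id_obj]
            apply (adjF.homEquiv X.left Z.right).symm.injective
            rw [Adjunction.homEquiv_naturality_left_symm,
              Adjunction.homEquiv_naturality_right_symm, Equiv.symm_apply_apply]
            refine (congrArg (· ≫ (adjF.homEquiv Z.left Z.right).symm Z.hom) hll.symm).trans ?_
            refine (Category.assoc _ _ _).trans
              ((congrArg (CategoryStruct.comp _) ?_).trans (Category.assoc _ _ _).symm)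
            exact Arrow.w ((adj₀.homEquiv ((Tfun comm adjF adjG).obj X)
              (Arrow.mk ((adjF.homEquiv Z.left Z.right).symm Z.hom))).symm (innerHom comm adjF adjG χ))
          }
      left_inv := fun ψ => by
        apply CommaMorphism.ext
        · rfl
        · exact left_inv_aux comm adjF adjG L₀ adj₀ ψ _ rfl rfl
      right_inv := fun χ => by
        apply CommaMorphism.ext
        · rfl
        · have hφ := (adj₀.homEquiv ((Tfun comm adjF adjG).obj X)
            (Arrow.mk ((adjF.homEquiv Z.left Z.right).symm Z.hom))).apply_symm_apply
            (innerHom comm adjF adjG χ)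
          rw [Adjunction.homEquiv_unit] at hφ
          have := congrArg CommaMorphism.right hφ
          simp only [Comma.comp_right] at this
          simp [innerHom, toCocartComma] at this; exact this }
  homEquiv_naturality_left_symm := fun {X' X Z} f g => by
    apply CommaMorphism.ext
    · simp only [Equiv.coe_fn_symm_mk, Comma.comp_left]; rfl
    · have hinner : innerHom comm adjF adjG (f ≫ g)
          = (Tfun comm adjF adjG).map f ≫ innerHom comm adjF adjG g := by
        apply CommaMorphism.ext
        · simp [innerHom, Tfun, Comma.comp_left]; exact F.map_comp _ _
        · simp [innerHom, Tfun, Comma.comp_right]; rfl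
      show ((adj₀.homEquiv _ _).symm (innerHom comm adjF adjG (f ≫ g))).right = _
      rw [hinner, Adjunction.homEquiv_naturality_left_symm adj₀]
      dsimp only [Lfun]
      simp only [Equiv.coe_fn_symm_mk, Comma.comp_right, Arrow.comp_right]
      rfl
  homEquiv_naturality_right := fun {X Z Z'} ψ g => by
    apply CommaMorphism.ext
    · simp only [Equiv.coe_fn_mk, commaSlice, Comma.comp_left]; rfl
    · simp only [Equiv.coe_fn_mk, Comma.comp_right]
      dsimp only [commaSlice]
      erw [p.map_comp, Category.assoc]; rfl

lemma unit_app_isIso (X : Comma q V) :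
    IsIso (((core comm adjF adjG L₀ adj₀).homEquiv X
      ((Lfun comm adjF adjG L₀ adj₀).obj X)) (𝟙 ((Lfun comm adjF adjG L₀ adj₀).obj X))) := by
  set φ := ((core comm adjF adjG L₀ adj₀).homEquiv X
      ((Lfun comm adjF adjG L₀ adj₀).obj X)) (𝟙 ((Lfun comm adjF adjG L₀ adj₀).obj X)) with hφ
  have hl : φ.left = 𝟙 X.left := rfl
  have hr : φ.right = (adj₀.unit.app ((Tfun comm adjF adjG).obj X)).right
      ≫ p.map (𝟙 ((L₀.obj ((Tfun comm adjF adjG).obj X)).right)) := rfl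
  haveI : IsIso ((adj₀.unit.app ((Tfun comm adjF adjG).obj X)).right) :=
    (inferInstance :
      IsIso ((Comma.snd p (𝟭 B)).map (adj₀.unit.app ((Tfun comm adjF adjG).obj X))))
  haveI : IsIso φ.left := by rw [hl]; exact IsIso.id _
  haveI : IsIso φ.right := by rw [hr]; exact IsIso.comp_isIso' ‹IsIso ((adj₀.unit.app ((Tfun comm adjF adjG).obj X)).right)› (by rw [p.map_id]; exact IsIso.id _)
  exact comma_isIso_s19 φ

end Construction

/-- Let `q ∘ U = V ∘ p` be a strictly commutative square with `p` a
cocartesian fibration, and suppose `U` and `V` admit left adjoints `F` resp. `G` such that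
the square is adjointable (the mate `G ∘ q ⟶ p ∘ F` is invertible). Then the induced
functor `Comma (𝟭 C) U ⥤ Comma q V` admits a fully faithful left adjoint. -/
theorem statement19 (p : A ⥤ B) (U : A ⥤ C) (V : B ⥤ D) (q : C ⥤ D)
    (comm : U ⋙ q = p ⋙ V)
    (hp : IsCocartesianFibration p)
    (F : C ⥤ A) (G : D ⥤ B) (adjF : F ⊣ U) (adjG : G ⊣ V)
    (hmate : IsIso (mateRR adjF adjG comm.symm)) :
    ∃ (L : Comma q V ⥤ Comma (𝟭 C) U) (adj : L ⊣ commaSlice p U V q comm),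
      IsIso adj.unit := by
  obtain ⟨L₀, adj₀, hu⟩ := hp
  haveI := hmate
  haveI := hu
  refine ⟨Lfun comm adjF adjG L₀ adj₀,
    Adjunction.mkOfHomEquiv (core comm adjF adjG L₀ adj₀), ?_⟩
  have hiso : ∀ X : Comma q V,
      IsIso ((Adjunction.mkOfHomEquiv (core comm adjF adjG L₀ adj₀)).unit.app X) := by
    intro X
    have h : (Adjunction.mkOfHomEquiv (core comm adjF adjG L₀ adj₀)).unit.app X
        = ((core comm adjF adjG L₀ adj₀).homEquiv X
            ((Lfun comm adjF adjG L₀ adj₀).obj X))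
            (𝟙 ((Lfun comm adjF adjG L₀ adj₀).obj X)) := rfl
    rw [h]
    exact unit_app_isIso comm adjF adjG L₀ adj₀ X
  haveI := hiso
  exact NatIso.isIso_of_isIso_app _

end Paper
end
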